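/- arXiv:1211.4451 — 13 statements merged into one kernel-verified Lean document; each statement's English description precedes it below -/
import Mathlib

section
/- Let (Ḡ, j, p) be a central extension of a group G by ℝ and let s : G → Ḡ be a section of p with s(1) = 1, with defect c : G × G → ℝ and associated cochain Φ : Ḡ → ℝ. Assume c is bounded. Then: (1) for every ḡ ∈ Ḡ the limit φ(ḡ) := lim_{n→∞} Φ(ḡⁿ)/n exists; (2) φ(ḡ·j(t)) = φ(ḡ) + t for all ḡ ∈ Ḡ and t ∈ ℝ, in particular φ(j(t)) = t; (3) the function φ − Φ is bounded on Ḡ and is j(ℝ)-invariant, i.e. (φ − Φ)(j(t)·ḡ) = (φ − Φ)(ḡ) for all t ∈ ℝ and ḡ ∈ Ḡ. -/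
/-- if the defect `c` of the section is bounded, the homogenization
`φ(ḡ) = lim Φ(ḡⁿ)/n` of the associated cochain `Φ` exists, satisfies
`φ(ḡ·j t) = φ(ḡ) + t`, and `φ − Φ` is bounded and `j(ℝ)`-invariant. -/
theorem stmt_1 {G Gb : Type*} [Group G] [Group Gb]
    (j : ℝ → Gb) (p : Gb →* G)
    (hj_hom : ∀ t u : ℝ, j (t + u) = j t * j u)
    (hj_inj : Function.Injective j)
    (hj_cent : ∀ t : ℝ, j t ∈ Subgroup.center Gb)
    (hp_surj : Function.Surjective p)
    (hker : ∀ x : Gb, p x = 1 ↔ ∃ t : ℝ, j t = x)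
    (s : G → Gb) (hs : ∀ g : G, p (s g) = g) (hs1 : s 1 = 1)
    (c : G → G → ℝ) (hc : ∀ g h : G, j (c g h) = s g * s h * (s (g * h))⁻¹)
    (hc_bdd : ∃ k : ℝ, ∀ g h : G, |c g h| ≤ k)
    (Φ : Gb → ℝ) (hΦ : ∀ x : Gb, x = s (p x) * j (Φ x)) :
    ∃ φ : Gb → ℝ,
      (∀ x : Gb, Filter.Tendsto (fun n : ℕ => Φ (x ^ n) / n) Filter.atTop (nhds (φ x))) ∧
      (∀ (x : Gb) (t : ℝ), φ (x * j t) = φ x + t) ∧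
      (∀ t : ℝ, φ (j t) = t) ∧
      (∃ k : ℝ, ∀ x : Gb, |φ x - Φ x| ≤ k) ∧
      (∀ (t : ℝ) (x : Gb), φ (j t * x) - Φ (j t * x) = φ x - Φ x) := by
  obtain ⟨k, hk⟩ := hc_bdd
  have hk0 : 0 ≤ k := le_trans (abs_nonneg _) (hk 1 1)
  have hj0 : j 0 = 1 := by
    have h := hj_hom 0 0
    rw [add_zero] at h
    exact (left_eq_mul.mp h)
  have hcomm : ∀ (t : ℝ) (x : Gb), j t * x = x * j t := fun t x =>
    ((Subgroup.mem_center_iff.mp (hj_cent t)) x).symm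
  -- the key cocycle identity for Φ
  have key : ∀ x y : Gb, Φ (x * y) = Φ x + Φ y + c (p x) (p y) := by
    intro x y
    apply hj_inj
    apply mul_left_cancel (a := s (p x * p y))
    have hsmul : s (p x) * s (p y) = j (c (p x) (p y)) * s (p x * p y) := by
      rw [hc]
      group
    calc s (p x * p y) * j (Φ (x * y)) = s (p (x * y)) * j (Φ (x * y)) := by rw [map_mul]
      _ = x * y := (hΦ (x * y)).symm
      _ = (s (p x) * j (Φ x)) * (s (p y) * j (Φ y)) := by rw [← hΦ x, ← hΦ y]
      _ = s (p x) * ((j (Φ x) * s (p y)) * j (Φ y)) := by rw [mul_assoc, mul_assoc]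
      _ = s (p x) * ((s (p y) * j (Φ x)) * j (Φ y)) := by rw [hcomm]
      _ = (s (p x) * s (p y)) * (j (Φ x) * j (Φ y)) := by
          group
      _ = (j (c (p x) (p y)) * s (p x * p y)) * j (Φ x + Φ y) := by
          rw [hsmul, hj_hom]
      _ = s (p x * p y) * (j (c (p x) (p y)) * j (Φ x + Φ y)) := by
          rw [hcomm, mul_assoc]
      _ = s (p x * p y) * j (Φ x + Φ y + c (p x) (p y)) := by
          rw [← hj_hom, add_comm]
  have hΦ1 : Φ 1 = 0 := by
    apply hj_inj
    rw [hj0]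
    have h := hΦ 1
    rw [map_one, hs1, one_mul] at h
    exact h.symm
  have hpj : ∀ t : ℝ, p (j t) = 1 := fun t => (hker (j t)).mpr ⟨t, rfl⟩
  have hΦj : ∀ t : ℝ, Φ (j t) = t := by
    intro t
    apply hj_inj
    have h := hΦ (j t)
    rw [hpj, hs1, one_mul] at h
    exact h.symm
  have hcg1 : ∀ g : G, c g 1 = 0 := by
    intro g
    apply hj_inj
    rw [hj0, hc, hs1, mul_one, mul_one, mul_inv_cancel]
  have hΦmulj : ∀ (x : Gb) (t : ℝ), Φ (x * j t) = Φ x + t := by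
    intro x t
    rw [key, hpj, hcg1, hΦj, add_zero]
  have hjn : ∀ (t : ℝ) (n : ℕ), (j t) ^ n = j (n * t) := by
    intro t n
    induction n with
    | zero => simp [hj0]
    | succ m ih =>
        rw [pow_succ, ih, ← hj_hom]
        push_cast
        ring_nf
  have hpow : ∀ (x : Gb) (t : ℝ) (n : ℕ), (x * j t) ^ n = x ^ n * j (n * t) := by
    intro x t n
    have hcx : Commute x (j t) := (hcomm t x).symm
    rw [hcx.mul_pow, hjn]
  -- the bound |Φ(x^n) - n Φ x| ≤ n k
  have hbound : ∀ (x : Gb) (n : ℕ), |Φ (x ^ n) - n * Φ x| ≤ n * k := by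
    intro x n
    induction n with
    | zero => simp [hΦ1]
    | succ m ih =>
        have h1 : Φ (x ^ (m + 1)) = Φ (x ^ m) + Φ x + c (p (x ^ m)) (p x) := by
          rw [pow_succ, key]
        have : |Φ (x ^ (m + 1)) - (↑(m + 1)) * Φ x|
            = |(Φ (x ^ m) - m * Φ x) + c (p (x ^ m)) (p x)| := by
          rw [h1]; push_cast; ring_nf
        rw [this]
        push_cast
        calc |(Φ (x ^ m) - m * Φ x) + c (p (x ^ m)) (p x)|
            ≤ |Φ (x ^ m) - m * Φ x| + |c (p (x ^ m)) (p x)| := abs_add_le _ _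
          _ ≤ m * k + k := add_le_add ih (hk _ _)
          _ = (m + 1) * k := by ring
  -- existence of the limit, via Fekete
  have main : ∀ x : Gb, ∃ L : ℝ,
      Filter.Tendsto (fun n : ℕ => Φ (x ^ n) / n) Filter.atTop (nhds L) := by
    intro x
    set u : ℕ → ℝ := fun n => Φ (x ^ n) + k with hu
    have hsub : Subadditive u := by
      intro m n
      have h1 : Φ (x ^ (m + n)) = Φ (x ^ m) + Φ (x ^ n) + c (p (x ^ m)) (p (x ^ n)) := by
        rw [pow_add, key]
      have h2 : c (p (x ^ m)) (p (x ^ n)) ≤ k := le_trans (le_abs_self _) (hk _ _)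
      simp only [hu, h1]
      linarith
    have hlow : ∀ n : ℕ, (n : ℝ) * (Φ x - k) ≤ Φ (x ^ n) := by
      intro n
      induction n with
      | zero => simp [hΦ1]
      | succ m ih =>
          have h1 : Φ (x ^ (m + 1)) = Φ (x ^ m) + Φ x + c (p (x ^ m)) (p x) := by
            rw [pow_succ, key]
          have h2 : -k ≤ c (p (x ^ m)) (p x) := neg_le_of_abs_le (hk _ _)
          push_cast
          rw [h1]
          push_cast at ih
          linarith
    have hbdd : BddBelow (Set.range fun n : ℕ => u n / n) := by
      refine ⟨min 0 (Φ x - k), ?_⟩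
      rintro y ⟨n, rfl⟩
      rcases Nat.eq_zero_or_pos n with hn | hn
      · subst hn
        simp only [Nat.cast_zero, div_zero]
        exact min_le_left _ _
      · have hn' : (0 : ℝ) < n := by exact_mod_cast hn
        refine le_trans (min_le_right _ _) ?_
        rw [le_div_iff₀ hn']
        have := hlow n
        simp only [hu]
        nlinarith [hk0]
    have hT := hsub.tendsto_lim hbdd
    refine ⟨hsub.lim, ?_⟩
    have hT2 : Filter.Tendsto (fun n : ℕ => u n / n - k / n) Filter.atTop
        (nhds (hsub.lim - 0)) := hT.sub (tendsto_const_div_atTop_nhds_zero_nat k)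
    rw [sub_zero] at hT2
    refine hT2.congr fun n => ?_
    simp only [hu]
    rw [add_div, add_sub_cancel_right]
  choose φ hφ using main
  have prop2 : ∀ (x : Gb) (t : ℝ), φ (x * j t) = φ x + t := by
    intro x t
    have h1 : Filter.Tendsto (fun n : ℕ => Φ ((x * j t) ^ n) / n) Filter.atTop
        (nhds (φ x + t)) := by
      have h2 : Filter.Tendsto (fun n : ℕ => Φ (x ^ n) / n + t) Filter.atTop
          (nhds (φ x + t)) := (hφ x).add_const t
      refine h2.congr' ?_
      filter_upwards [Filter.eventually_ge_atTop 1] with n hn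
      have hn' : (n : ℝ) ≠ 0 := by positivity
      rw [hpow, hΦmulj, add_div, mul_div_cancel_left₀ t hn']
    exact tendsto_nhds_unique (hφ _) h1
  have hφ1 : φ 1 = 0 := by
    have h1 : Filter.Tendsto (fun n : ℕ => Φ ((1 : Gb) ^ n) / n) Filter.atTop (nhds 0) := by
      simp only [one_pow, hΦ1, zero_div]
      exact tendsto_const_nhds
    exact tendsto_nhds_unique (hφ 1) h1
  have prop3 : ∀ t : ℝ, φ (j t) = t := by
    intro t
    have := prop2 1 t
    rwa [one_mul, hφ1, zero_add] at this
  refine ⟨φ, hφ, prop2, prop3, ⟨k, ?_⟩, ?_⟩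
  · intro x
    have h1 : Filter.Tendsto (fun n : ℕ => |Φ (x ^ n) / n - Φ x|) Filter.atTop
        (nhds |φ x - Φ x|) := ((hφ x).sub_const (Φ x)).abs
    refine le_of_tendsto h1 ?_
    filter_upwards [Filter.eventually_ge_atTop 1] with n hn
    have hn' : (0 : ℝ) < n := by exact_mod_cast hn
    have h2 := hbound x n
    rw [div_sub' hn'.ne', abs_div, abs_of_pos hn', div_le_iff₀ hn']
    calc |Φ (x ^ n) - n * Φ x| ≤ n * k := h2
      _ = k * n := by ring
  · intro t x
    rw [hcomm t x, prop2, hΦmulj]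
    ring
end

section
/- Let (Ḡ, j, p) be a central extension of a group G by ℝ and let s : G → Ḡ be a section of p with s(1) = 1, with bounded defect c and associated cochain Φ; let φ(ḡ) := lim_{n→∞} Φ(ḡⁿ)/n (which exists). Define b : G → ℝ by b(g) := φ(s(g)) and s₀ : G → Ḡ by s₀(g) := s(g)·j(b(g))⁻¹. Then s₀ is a section of p with s₀(1) = 1, and: (1) the function h : Ḡ → ℝ determined by ḡ = j(h(ḡ))·s₀(p(ḡ)) is equal to φ; (2) the defect c̄ of s₀ satisfies c̄(g₁,g₂) = c(g₁,g₂) − (b(g₂) − b(g₁g₂) + b(g₁)) for all g₁,g₂ ∈ G, with b bounded. -/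
/-- modifying the section `s` by the bounded cochain `b(g) = φ(s g)` yields a
section `s₀` whose associated cochain is the homogeneous quasimorphism `φ` and whose defect
differs from `c` by the coboundary of the bounded function `b`. -/
theorem stmt_2 {G Gb : Type*} [Group G] [Group Gb]
    (j : ℝ → Gb) (p : Gb →* G)
    (hj_hom : ∀ t u : ℝ, j (t + u) = j t * j u)
    (hj_inj : Function.Injective j)
    (hj_cent : ∀ t : ℝ, j t ∈ Subgroup.center Gb)
    (hp_surj : Function.Surjective p)
    (hker : ∀ x : Gb, p x = 1 ↔ ∃ t : ℝ, j t = x)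
    (s : G → Gb) (hs : ∀ g : G, p (s g) = g) (hs1 : s 1 = 1)
    (c : G → G → ℝ) (hc : ∀ g h : G, j (c g h) = s g * s h * (s (g * h))⁻¹)
    (hc_bdd : ∃ k : ℝ, ∀ g h : G, |c g h| ≤ k)
    (Φ : Gb → ℝ) (hΦ : ∀ x : Gb, x = s (p x) * j (Φ x))
    (φ : Gb → ℝ)
    (hφ : ∀ x : Gb, Filter.Tendsto (fun n : ℕ => Φ (x ^ n) / n) Filter.atTop (nhds (φ x)))
    (b : G → ℝ) (hb : ∀ g : G, b g = φ (s g))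
    (s₀ : G → Gb) (hs₀ : ∀ g : G, s₀ g = s g * (j (b g))⁻¹) :
    (∀ g : G, p (s₀ g) = g) ∧ s₀ 1 = 1 ∧
    -- (1) the cochain `h` associated to `s₀` (determined by `x = j (h x) * s₀ (p x)`) is `φ`
    (∀ h : Gb → ℝ, (∀ x : Gb, x = j (h x) * s₀ (p x)) → h = φ) ∧
    (∀ x : Gb, x = j (φ x) * s₀ (p x)) ∧
    -- (2) the defect of `s₀` is `c - db` with `b` bounded
    (∀ g₁ g₂ : G,
      s₀ g₁ * s₀ g₂ * (s₀ (g₁ * g₂))⁻¹ = j (c g₁ g₂ - (b g₂ - b (g₁ * g₂) + b g₁))) ∧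
    (∃ k : ℝ, ∀ g : G, |b g| ≤ k) := by
  obtain ⟨k, hk⟩ := hc_bdd
  -- basic facts about j
  have hj0 : j 0 = 1 := by
    have h00 : j 0 * j 0 = j 0 * 1 := by rw [mul_one, ← hj_hom]; norm_num
    exact mul_left_cancel h00
  have hjneg : ∀ t : ℝ, j (-t) = (j t)⁻¹ := by
    intro t
    apply eq_inv_of_mul_eq_one_left
    rw [← hj_hom]; simp [hj0]
  have hcomm : ∀ (x : Gb) (t : ℝ), x * j t = j t * x := fun x t =>
    Subgroup.mem_center_iff.mp (hj_cent t) x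
  have hpj : ∀ t : ℝ, p (j t) = 1 := fun t => (hker (j t)).mpr ⟨t, rfl⟩
  -- uniqueness of Φ
  have huniq : ∀ (y : Gb) (u : ℝ), y = s (p y) * j u → Φ y = u := by
    intro y u h
    have h2 : s (p y) * j (Φ y) = s (p y) * j u := (hΦ y).symm.trans h
    exact hj_inj (mul_left_cancel h2)
  have hΦs : ∀ g : G, Φ (s g) = 0 := by
    intro g
    apply huniq
    rw [hj0, mul_one, hs]
  have hΦ1 : Φ (1 : Gb) = 0 := by
    apply huniq
    rw [hj0, mul_one, map_one, hs1]
  -- Φ of products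
  have hsmul : ∀ g h : G, s g * s h = j (c g h) * s (g * h) := by
    intro g h
    rw [hc g h, inv_mul_cancel_right]
  have hΦmul : ∀ x y : Gb, Φ (x * y) = Φ x + Φ y + c (p x) (p y) := by
    intro x y
    have hcalc : x * y = s (p (x * y)) * j (c (p x) (p y) + (Φ x + Φ y)) :=
      calc x * y = (s (p x) * j (Φ x)) * (s (p y) * j (Φ y)) := by
            rw [← hΦ x, ← hΦ y]
        _ = s (p x) * (j (Φ x) * s (p y)) * j (Φ y) := by group
        _ = s (p x) * (s (p y) * j (Φ x)) * j (Φ y) := by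
            rw [← hcomm (s (p y)) (Φ x)]
        _ = (s (p x) * s (p y)) * (j (Φ x) * j (Φ y)) := by group
        _ = (j (c (p x) (p y)) * s (p x * p y)) * j (Φ x + Φ y) := by
            rw [hsmul, hj_hom]
        _ = (s (p x * p y) * j (c (p x) (p y))) * j (Φ x + Φ y) := by
            rw [← hcomm (s (p x * p y)) (c (p x) (p y))]
        _ = s (p (x * y)) * j (c (p x) (p y) + (Φ x + Φ y)) := by
            rw [mul_assoc, ← hj_hom, map_mul]
    have := huniq (x * y) _ hcalc
    linarith
  -- Φ(x * j t) = Φ x + t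
  have hΦjt : ∀ (x : Gb) (t : ℝ), Φ (x * j t) = Φ x + t := by
    intro x t
    apply huniq
    rw [map_mul, hpj, mul_one, hj_hom, ← mul_assoc, ← hΦ x]
  -- powers of j
  have hjpow : ∀ (t : ℝ) (n : ℕ), (j t) ^ n = j (n * t) := by
    intro t n
    induction n with
    | zero => simp [hj0]
    | succ m ih => rw [pow_succ, ih, ← hj_hom]; push_cast; ring_nf
  -- Φ on powers
  have hΦpow : ∀ (x : Gb) (n : ℕ), |Φ (x ^ n) - n * Φ x| ≤ n * k := by
    intro x n
    induction n with
    | zero => simp [hΦ1]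
    | succ m ih =>
      rw [pow_succ, hΦmul]
      have hcb := hk (p (x ^ m)) (p x)
      calc |Φ (x ^ m) + Φ x + c (p (x ^ m)) (p x) - (↑(m + 1)) * Φ x|
          ≤ |Φ (x ^ m) - m * Φ x| + |c (p (x ^ m)) (p x)| := by
            push_cast
            have : Φ (x ^ m) + Φ x + c (p (x ^ m)) (p x) - (m + 1) * Φ x
                = (Φ (x ^ m) - m * Φ x) + c (p (x ^ m)) (p x) := by ring
            rw [this]
            exact abs_add_le _ _
        _ ≤ m * k + k := add_le_add ih hcb
        _ = (↑(m + 1)) * k := by push_cast; ring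
  -- |φ x - Φ x| ≤ k
  have hφΦ : ∀ x : Gb, |φ x - Φ x| ≤ k := by
    intro x
    have h2 : Filter.Tendsto (fun n : ℕ => |Φ (x ^ n) / n - Φ x|)
        Filter.atTop (nhds |φ x - Φ x|) := ((hφ x).sub_const _).abs
    apply le_of_tendsto h2
    filter_upwards [Filter.eventually_ge_atTop 1] with n hn
    have hn0 : (0 : ℝ) < n := by exact_mod_cast hn
    have hbd := hΦpow x n
    have heq : Φ (x ^ n) / n - Φ x = (Φ (x ^ n) - n * Φ x) / n := by
      field_simp
    rw [heq, abs_div, abs_of_pos hn0, div_le_iff₀ hn0]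
    calc |Φ (x ^ n) - n * Φ x| ≤ n * k := hbd
      _ = k * n := by ring
  -- φ(x * j t) = φ x + t
  have hφjt : ∀ (x : Gb) (t : ℝ), φ (x * j t) = φ x + t := by
    intro x t
    have hcmt : Commute x (j t) := (hcomm x t)
    have e : (fun n : ℕ => Φ (x ^ n) / n + t) =ᶠ[Filter.atTop]
        (fun n : ℕ => Φ ((x * j t) ^ n) / n) := by
      filter_upwards [Filter.eventually_ge_atTop 1] with n hn
      have hn0 : (n : ℝ) ≠ 0 := by positivity
      rw [hcmt.mul_pow, hjpow, hΦjt]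
      field_simp
    exact (tendsto_nhds_unique
      (Filter.Tendsto.congr' e ((hφ x).add_const t)) (hφ (x * j t))).symm
  -- φ 1 = 0
  have hφ1 : φ (1 : Gb) = 0 := by
    have : Filter.Tendsto (fun n : ℕ => Φ ((1 : Gb) ^ n) / n)
        Filter.atTop (nhds 0) := by
      simp only [one_pow, hΦ1, zero_div]
      exact tendsto_const_nhds
    exact tendsto_nhds_unique (hφ 1) this
  -- key identity: φ x = b (p x) + Φ x
  have hφx : ∀ x : Gb, φ x = b (p x) + Φ x := by
    intro x
    calc φ x = φ (s (p x) * j (Φ x)) := by rw [← hΦ x]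
      _ = φ (s (p x)) + Φ x := hφjt _ _
      _ = b (p x) + Φ x := by rw [hb]
  -- component (i): section
  have hsec : ∀ g : G, p (s₀ g) = g := by
    intro g
    rw [hs₀, map_mul, map_inv, hpj, hs, inv_one, mul_one]
  -- component (ii): s₀ 1 = 1
  have hb1 : b 1 = 0 := by rw [hb, hs1, hφ1]
  have hs₀1 : s₀ 1 = 1 := by rw [hs₀, hb1, hj0, hs1, inv_one, mul_one]
  -- component (iv)
  have hiv : ∀ x : Gb, x = j (φ x) * s₀ (p x) := by
    intro x
    calc x = s (p x) * j (Φ x) := hΦ x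
      _ = s (p x) * j (φ x - b (p x)) := by
          congr 1; congr 1; have := hφx x; linarith
      _ = s (p x) * (j (φ x) * j (-(b (p x)))) := by
          rw [← hj_hom]; ring_nf
      _ = (s (p x) * j (φ x)) * (j (b (p x)))⁻¹ := by rw [hjneg]; group
      _ = (j (φ x) * s (p x)) * (j (b (p x)))⁻¹ := by
          rw [hcomm (s (p x)) (φ x)]
      _ = j (φ x) * s₀ (p x) := by rw [hs₀]; group
  -- component (iii)
  have hiii : ∀ h : Gb → ℝ, (∀ x : Gb, x = j (h x) * s₀ (p x)) → h = φ := by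
    intro h hh
    funext x
    apply hj_inj
    exact mul_right_cancel ((hh x).symm.trans (hiv x))
  -- component (v): defect
  have hv : ∀ g₁ g₂ : G,
      s₀ g₁ * s₀ g₂ * (s₀ (g₁ * g₂))⁻¹ = j (c g₁ g₂ - (b g₂ - b (g₁ * g₂) + b g₁)) := by
    intro g₁ g₂
    have key : ∀ (x y z : Gb) (t u v : ℝ),
        (x * j t) * (y * j u) * (j v * z) = (x * y * z) * j (t + u + v) := by
      intro x y z t u v
      calc (x * j t) * (y * j u) * (j v * z)
          = x * (j t * y) * (j u * j v) * z := by group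
        _ = x * (y * j t) * (j u * j v) * z := by rw [← hcomm y t]
        _ = x * (y * j t) * j (u + v) * z := by rw [hj_hom]
        _ = (x * y) * (j t * j (u + v)) * z := by group
        _ = (x * y) * j (t + (u + v)) * z := by rw [← hj_hom t (u + v)]
        _ = (x * y) * (z * j (t + (u + v))) := by
            rw [mul_assoc, ← hcomm z (t + (u + v))]
        _ = (x * y * z) * j (t + u + v) := by rw [add_assoc]; group
    calc s₀ g₁ * s₀ g₂ * (s₀ (g₁ * g₂))⁻¹
        = (s g₁ * j (-(b g₁))) * (s g₂ * j (-(b g₂))) *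
            (j (b (g₁ * g₂)) * (s (g₁ * g₂))⁻¹) := by
          rw [hs₀ g₁, hs₀ g₂, hs₀ (g₁ * g₂), hjneg, hjneg, mul_inv_rev, inv_inv]
      _ = (s g₁ * s g₂ * (s (g₁ * g₂))⁻¹) *
            j (-(b g₁) + -(b g₂) + b (g₁ * g₂)) := key _ _ _ _ _ _
      _ = j (c g₁ g₂) * j (-(b g₁) + -(b g₂) + b (g₁ * g₂)) := by rw [hc]
      _ = j (c g₁ g₂ - (b g₂ - b (g₁ * g₂) + b g₁)) := by
          rw [← hj_hom]; ring_nf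
  -- component (vi): b bounded
  have hvi : ∃ K : ℝ, ∀ g : G, |b g| ≤ K := by
    refine ⟨k, fun g => ?_⟩
    have := hφΦ (s g)
    rw [hΦs g, sub_zero] at this
    rw [hb]; exact this
  exact ⟨hsec, hs₀1, hiii, hiv, hv, hvi⟩
end

section
/- Let (Ḡ, j, p) be a central extension of a group G by ℝ and let s_x : G → Ḡ be a section of p (with s_x(1)=1) whose associated cochain φ : Ḡ → ℝ (determined by ḡ = s_x(p(ḡ))·j(φ(ḡ))) is homogeneous, i.e. φ(ḡⁿ) = n·φ(ḡ) for all ḡ ∈ Ḡ and n ∈ ℤ, and whose defect c_x is bounded. Then: (1) s_x(gⁿ) = (s_x(g))ⁿ for all g ∈ G and n ∈ ℤ; (2) s_x(g h g⁻¹) = s_x(g)·s_x(h)·s_x(g)⁻¹ for all g, h ∈ G; (3) for every z ∈ Z(G) and g ∈ G, s_x(z) ∈ Z(Ḡ) and s_x(gz) = s_x(g)·s_x(z); (4) every z̄ ∈ Z(Ḡ) satisfies z̄ = s_x(p(z̄))·j(φ(z̄)), and φ(z̄·ḡ) = φ(z̄) + φ(ḡ) for all z̄ ∈ Z(Ḡ),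 ḡ ∈ Ḡ. Consequently z̄ ↦ (φ(z̄), p(z̄)) is a group isomorphism from Z(Ḡ) onto ℝ × Z(G). -/
private lemma real_eq_zero_of_bdd (d K : ℝ) (h : ∀ n : ℕ, (n : ℝ) * |d| ≤ K) : d = 0 := by
  by_contra hd
  have hd' : 0 < |d| := abs_pos.2 hd
  obtain ⟨n, hn⟩ := exists_nat_gt (K / |d|)
  have h1 : K < (n : ℝ) * |d| := (div_lt_iff₀ hd').mp hn
  linarith [h n]

/-- properties of a section `s_x` with homogeneous associated cochain `φ` and
bounded defect: equivariance properties of `s_x`, its behaviour on the centre, and the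
induced isomorphism `Z(Ḡ) ≃ ℝ × Z(G)`. -/
theorem stmt_3 {G Gb : Type*} [Group G] [Group Gb]
    (j : ℝ → Gb) (p : Gb →* G)
    (hj_hom : ∀ t u : ℝ, j (t + u) = j t * j u)
    (hj_inj : Function.Injective j)
    (hj_cent : ∀ t : ℝ, j t ∈ Subgroup.center Gb)
    (hp_surj : Function.Surjective p)
    (hker : ∀ x : Gb, p x = 1 ↔ ∃ t : ℝ, j t = x)
    (sx : G → Gb) (hsx : ∀ g : G, p (sx g) = g) (hsx1 : sx 1 = 1)
    (φ : Gb → ℝ) (hφ : ∀ x : Gb, x = sx (p x) * j (φ x))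
    (hφ_hom : ∀ (x : Gb) (n : ℤ), φ (x ^ n) = n * φ x)
    (cx : G → G → ℝ) (hcx : ∀ g h : G, j (cx g h) = sx g * sx h * (sx (g * h))⁻¹)
    (hcx_bdd : ∃ k : ℝ, ∀ g h : G, |cx g h| ≤ k) :
    -- (1)
    (∀ (g : G) (n : ℤ), sx (g ^ n) = (sx g) ^ n) ∧
    -- (2)
    (∀ g h : G, sx (g * h * g⁻¹) = sx g * sx h * (sx g)⁻¹) ∧
    -- (3)
    (∀ z ∈ Subgroup.center G, sx z ∈ Subgroup.center Gb) ∧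
    (∀ (g : G), ∀ z ∈ Subgroup.center G, sx (g * z) = sx g * sx z) ∧
    -- (4)
    (∀ zb ∈ Subgroup.center Gb, zb = sx (p zb) * j (φ zb)) ∧
    (∀ zb ∈ Subgroup.center Gb, ∀ x : Gb, φ (zb * x) = φ zb + φ x) ∧
    -- consequence: `z̄ ↦ (φ z̄, p z̄)` is a group isomorphism `Z(Ḡ) ≃ ℝ × Z(G)`
    (∀ zb ∈ Subgroup.center Gb, p zb ∈ Subgroup.center G) ∧
    (∀ zb ∈ Subgroup.center Gb, ∀ wb ∈ Subgroup.center Gb,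
      φ (zb * wb) = φ zb + φ wb ∧ p (zb * wb) = p zb * p wb) ∧
    (∀ zb ∈ Subgroup.center Gb, ∀ wb ∈ Subgroup.center Gb,
      φ zb = φ wb → p zb = p wb → zb = wb) ∧
    (∀ (t : ℝ), ∀ g ∈ Subgroup.center G,
      ∃ zb ∈ Subgroup.center Gb, φ zb = t ∧ p zb = g) := by
  obtain ⟨k, hk⟩ := hcx_bdd
  -- basic facts
  have hj0 : j 0 = 1 := by
    have h := hj_hom 0 0
    rw [add_zero] at h
    have h2 : j 0 * j 0 = j 0 * 1 := by rw [mul_one]; exact h.symm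
    exact mul_left_cancel h2
  have hpj : ∀ t, p (j t) = 1 := fun t => (hker (j t)).mpr ⟨t, rfl⟩
  have hcomm : ∀ (t : ℝ) (x : Gb), j t * x = x * j t := fun t x =>
    (Subgroup.mem_center_iff.mp (hj_cent t) x).symm
  have hco : ∀ (t : ℝ) (x : Gb), Commute (j t) x := fun t x => hcomm t x
  -- decomposition computations
  have hp_dec : ∀ (g : G) (t : ℝ), p (sx g * j t) = g := by
    intro g t; rw [map_mul, hsx, hpj, mul_one]
  have hφ_dec : ∀ (g : G) (t : ℝ), φ (sx g * j t) = t := by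
    intro g t
    have h := hφ (sx g * j t)
    rw [hp_dec] at h
    exact (hj_inj (mul_left_cancel h)).symm
  have hφ_sx : ∀ g, φ (sx g) = 0 := by
    intro g
    have h : φ (sx g * j 0) = 0 := hφ_dec g 0
    rwa [hj0, mul_one] at h
  -- the section product decomposition
  have hsx_mul : ∀ g h : G, sx g * sx h = j (cx g h) * sx (g * h) := by
    intro g h
    rw [hcx g h, inv_mul_cancel_right]
  -- φ is a quasimorphism with defect cx
  have hquasi : ∀ x y : Gb, φ (x * y) = φ x + φ y + cx (p x) (p y) := by
    intro x y
    have hxy : x * y = sx (p x * p y) * j (cx (p x) (p y) + (φ x + φ y)) := by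
      calc x * y = (sx (p x) * j (φ x)) * (sx (p y) * j (φ y)) := by
            rw [← hφ x, ← hφ y]
        _ = (sx (p x) * sx (p y)) * (j (φ x) * j (φ y)) :=
            (hco (φ x) (sx (p y))).mul_mul_mul_comm (sx (p x)) (j (φ y))
        _ = (j (cx (p x) (p y)) * sx (p x * p y)) * j (φ x + φ y) := by
            rw [hsx_mul, hj_hom]
        _ = sx (p x * p y) * j (cx (p x) (p y)) * j (φ x + φ y) := by
            rw [hcomm]
        _ = sx (p x * p y) * j (cx (p x) (p y) + (φ x + φ y)) := by
            rw [hj_hom (cx (p x) (p y)) (φ x + φ y), mul_assoc]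
    have h1 : φ (x * y) = cx (p x) (p y) + (φ x + φ y) := by
      have h2 := hφ_dec (p x * p y) (cx (p x) (p y) + (φ x + φ y))
      rw [← hxy] at h2
      exact h2
    linarith
  -- conjugation invariance of the homogeneous quasimorphism φ
  have hconj : ∀ x y : Gb, φ (y * x * y⁻¹) = φ x := by
    intro x y
    have hinv : φ y⁻¹ = -φ y := by
      have h := hφ_hom y (-1)
      simpa using h
    have key : ∀ n : ℕ, (n : ℝ) * |φ (y * x * y⁻¹) - φ x| ≤ 2 * k := by
      intro n
      have hzp : (y * x * y⁻¹) ^ (n : ℤ) = y * x ^ (n : ℤ) * y⁻¹ := by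
        have h := map_zpow (MulAut.conj y) x (n : ℤ)
        simpa [MulAut.conj] using h.symm
      have e1 : φ ((y * x * y⁻¹) ^ (n : ℤ)) = (n : ℝ) * φ (y * x * y⁻¹) := by
        rw [hφ_hom]; push_cast; ring
      have e2 : φ (y * (x ^ (n : ℤ) * y⁻¹)) =
          φ y + φ (x ^ (n : ℤ) * y⁻¹) + cx (p y) (p (x ^ (n : ℤ) * y⁻¹)) :=
        hquasi y (x ^ (n : ℤ) * y⁻¹)
      have e3 : φ (x ^ (n : ℤ) * y⁻¹) =
          φ (x ^ (n : ℤ)) + φ y⁻¹ + cx (p (x ^ (n : ℤ))) (p y⁻¹) :=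
        hquasi (x ^ (n : ℤ)) y⁻¹
      have e4 : φ (x ^ (n : ℤ)) = (n : ℝ) * φ x := by
        rw [hφ_hom]; push_cast; ring
      have hb1 := hk (p y) (p (x ^ (n : ℤ) * y⁻¹))
      have hb2 := hk (p (x ^ (n : ℤ))) (p y⁻¹)
      have heq : (n : ℝ) * (φ (y * x * y⁻¹) - φ x) =
          cx (p y) (p (x ^ (n : ℤ) * y⁻¹)) + cx (p (x ^ (n : ℤ))) (p y⁻¹) := by
        have e5 : φ ((y * x * y⁻¹) ^ (n : ℤ)) = φ (y * (x ^ (n : ℤ) * y⁻¹)) := by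
          rw [hzp, mul_assoc]
        rw [e1] at e5
        rw [e2, e3, e4, hinv] at e5
        linarith
      calc (n : ℝ) * |φ (y * x * y⁻¹) - φ x|
          = |(n : ℝ) * (φ (y * x * y⁻¹) - φ x)| := by
            rw [abs_mul, abs_of_nonneg (by positivity : (0:ℝ) ≤ (n:ℝ))]
        _ ≤ 2 * k := by
            rw [heq]
            calc |cx (p y) (p (x ^ (n : ℤ) * y⁻¹)) + cx (p (x ^ (n : ℤ))) (p y⁻¹)|
                ≤ |cx (p y) (p (x ^ (n : ℤ) * y⁻¹))| + |cx (p (x ^ (n : ℤ))) (p y⁻¹)| :=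
                  abs_add_le _ _
              _ ≤ 2 * k := by linarith
    have hd := real_eq_zero_of_bdd (φ (y * x * y⁻¹) - φ x) (2 * k)
      (fun n => by simpa using key n)
    linarith
  -- (1)
  have part1 : ∀ (g : G) (n : ℤ), sx (g ^ n) = sx g ^ n := by
    intro g n
    have hp' : p (sx g ^ n) = g ^ n := by rw [map_zpow, hsx]
    have hφ' : φ (sx g ^ n) = 0 := by rw [hφ_hom, hφ_sx, mul_zero]
    have h := hφ (sx g ^ n)
    rw [hp', hφ', hj0, mul_one] at h
    exact h.symm
  -- (2)
  have part2 : ∀ g h : G, sx (g * h * g⁻¹) = sx g * sx h * (sx g)⁻¹ := by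
    intro g h
    have hp' : p (sx g * sx h * (sx g)⁻¹) = g * h * g⁻¹ := by
      rw [map_mul, map_mul, map_inv, hsx, hsx]
    have hφ' : φ (sx g * sx h * (sx g)⁻¹) = 0 := by
      rw [hconj (sx h) (sx g), hφ_sx]
    have h' := hφ (sx g * sx h * (sx g)⁻¹)
    rw [hp', hφ', hj0, mul_one] at h'
    exact h'.symm
  -- (3) first half
  have part3a : ∀ z ∈ Subgroup.center G, sx z ∈ Subgroup.center Gb := by
    intro z hz
    rw [Subgroup.mem_center_iff]
    intro x
    have hcz : sx (p x) * sx z = sx z * sx (p x) := by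
      have h1 : sx (p x) * sx z * (sx (p x))⁻¹ = sx z := by
        rw [← part2]
        congr 1
        rw [Subgroup.mem_center_iff.mp hz (p x), mul_inv_cancel_right]
      calc sx (p x) * sx z
          = sx (p x) * sx z * (sx (p x))⁻¹ * sx (p x) := by group
        _ = sx z * sx (p x) := by rw [h1]
    calc x * sx z = sx (p x) * j (φ x) * sx z := by rw [← hφ x]
      _ = sx (p x) * (j (φ x) * sx z) := by rw [mul_assoc]
      _ = sx (p x) * (sx z * j (φ x)) := by rw [hcomm]
      _ = sx (p x) * sx z * j (φ x) := by rw [mul_assoc]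
      _ = sx z * sx (p x) * j (φ x) := by rw [hcz]
      _ = sx z * (sx (p x) * j (φ x)) := by rw [mul_assoc]
      _ = sx z * x := by rw [← hφ x]
  -- cx vanishes when the second argument is central
  have hcx_gz : ∀ (g : G), ∀ z ∈ Subgroup.center G, cx g z = 0 := by
    intro g z hz
    have hcomm' : Commute (sx g) (sx z) :=
      Subgroup.mem_center_iff.mp (part3a z hz) (sx g)
    have key : ∀ n : ℕ, (n : ℝ) * |cx g z| ≤ k := by
      intro n
      have e1 : φ ((sx g * sx z) ^ (n : ℤ)) = (n : ℝ) * φ (sx g * sx z) := by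
        rw [hφ_hom]; push_cast; ring
      have e2 : (sx g * sx z) ^ (n : ℤ) = sx (g ^ (n : ℤ)) * sx (z ^ (n : ℤ)) := by
        rw [hcomm'.mul_zpow, part1, part1]
      have e3 : φ (sx (g ^ (n : ℤ)) * sx (z ^ (n : ℤ))) = cx (g ^ (n : ℤ)) (z ^ (n : ℤ)) := by
        rw [hquasi, hφ_sx, hφ_sx, hsx, hsx]; ring
      have e4 : φ (sx g * sx z) = cx g z := by
        rw [hquasi, hφ_sx, hφ_sx, hsx, hsx]; ring
      have heq : (n : ℝ) * cx g z = cx (g ^ (n : ℤ)) (z ^ (n : ℤ)) := by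
        rw [← e4, ← e1, e2, e3]
      calc (n : ℝ) * |cx g z| = |(n : ℝ) * cx g z| := by
            rw [abs_mul, abs_of_nonneg (by positivity : (0:ℝ) ≤ (n:ℝ))]
        _ = |cx (g ^ (n : ℤ)) (z ^ (n : ℤ))| := by rw [heq]
        _ ≤ k := hk _ _
    exact real_eq_zero_of_bdd _ k key
  -- (3) second half
  have part3b : ∀ (g : G), ∀ z ∈ Subgroup.center G, sx (g * z) = sx g * sx z := by
    intro g z hz
    have h := hcx g z
    rw [hcx_gz g z hz, hj0] at h
    have h2 : sx g * sx z * (sx (g * z))⁻¹ = 1 := h.symm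
    rw [mul_inv_eq_one] at h2
    exact h2.symm
  -- cx vanishes when the first argument is central
  have hcx_zg : ∀ z ∈ Subgroup.center G, ∀ g : G, cx z g = 0 := by
    intro z hz g
    have h1 : sx z * sx g = sx (z * g) := by
      rw [← Subgroup.mem_center_iff.mp (part3a z hz) (sx g), ← part3b g z hz]
      congr 1
      exact Subgroup.mem_center_iff.mp hz g
    have h2 := hcx z g
    rw [h1, mul_inv_cancel, ← hj0] at h2
    exact hj_inj h2
  -- p maps the centre to the centre
  have hpz : ∀ zb ∈ Subgroup.center Gb, p zb ∈ Subgroup.center G := by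
    intro zb hzb
    rw [Subgroup.mem_center_iff]
    intro g
    calc g * p zb = p (sx g * zb) := by rw [map_mul, hsx]
      _ = p (zb * sx g) := by rw [Subgroup.mem_center_iff.mp hzb (sx g)]
      _ = p zb * g := by rw [map_mul, hsx]
  -- (4) second half
  have part4b : ∀ zb ∈ Subgroup.center Gb, ∀ x : Gb, φ (zb * x) = φ zb + φ x := by
    intro zb hzb x
    rw [hquasi, hcx_zg (p zb) (hpz zb hzb) (p x), add_zero]
  refine ⟨part1, part2, part3a, part3b, fun zb _ => hφ zb, part4b, hpz, ?_, ?_, ?_⟩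
  · intro zb hzb wb hwb
    exact ⟨part4b zb hzb wb, map_mul p zb wb⟩
  · intro zb hzb wb hwb h1 h2
    calc zb = sx (p zb) * j (φ zb) := hφ zb
      _ = sx (p wb) * j (φ wb) := by rw [h1, h2]
      _ = wb := (hφ wb).symm
  · intro t g hg
    exact ⟨sx g * j t, Subgroup.mul_mem _ (part3a g hg) (hj_cent t),
      hφ_dec g t, hp_dec g t⟩
end

section
/- Let G be a group. For every bounded 2-cocycle c on G there exists a unique bounded 2-cocycle c_x on G such that c_x(gⁿ, gᵐ) = 0 for all g ∈ G and all n, m ∈ ℕ, and such that c − c_x is the coboundary db of some bounded function b : G → ℝ. (c_x is called the homogeneous bounded 2-cocycle representing the bounded cohomology class of c.) -/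
/-- A bounded real 2-cocycle on a group `G` (normalized: vanishing when one argument is 1). -/
def IsBounded2Cocycle {G : Type*} [Group G] (c : G → G → ℝ) : Prop :=
  (∃ k : ℝ, ∀ g h : G, |c g h| ≤ k) ∧
  (∀ g h k : G, c h k - c (g * h) k + c g (h * k) - c g h = 0) ∧
  (∀ g : G, c g 1 = 0) ∧ (∀ g : G, c 1 g = 0)

/-- A homogeneous 2-cocycle: it vanishes on pairs of powers of a single element. -/
def IsHomogeneous2Cocycle {G : Type*} [Group G] (c : G → G → ℝ) : Prop :=
  ∀ (g : G) (n m : ℕ), c (g ^ n) (g ^ m) = 0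

namespace Stmt4Aux

open Filter Topology

variable {G : Type*} [Group G]

/-- The trivialization of the cocycle on the cyclic subgroup generated by `g`. -/
def A (c : G → G → ℝ) (g : G) (n : ℕ) : ℝ := ∑ i ∈ Finset.range n, c (g ^ i) g

/-- The bounded primitive used to homogenize the cocycle. -/
noncomputable def B (c : G → G → ℝ) (g : G) : ℝ := limUnder atTop (fun n : ℕ => A c g n / n)

lemma A_succ (c : G → G → ℝ) (g : G) (k : ℕ) : A c g (k + 1) = A c g k + c (g ^ k) g :=
  Finset.sum_range_succ _ _

variable {c : G → G → ℝ}

lemma A_add (hco : ∀ g h k : G, c h k - c (g * h) k + c g (h * k) - c g h = 0)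
    (h1 : ∀ g : G, c g 1 = 0) (g : G) (n m : ℕ) :
    A c g (n + m) = A c g n + A c g m + c (g ^ n) (g ^ m) := by
  induction m with
  | zero => simp [A, h1]
  | succ m ih =>
    have hcid := hco (g ^ n) (g ^ m) g
    rw [← pow_add, ← pow_succ] at hcid
    have h2 := A_succ c g (n + m)
    have h3 := A_succ c g m
    have h4 : n + (m + 1) = (n + m) + 1 := rfl
    rw [h4, h2]
    linarith

lemma A_pow (hco : ∀ g h k : G, c h k - c (g * h) k + c g (h * k) - c g h = 0)
    (h1 : ∀ g : G, c g 1 = 0) (g : G) (n k : ℕ) :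
    A c (g ^ n) k = A c g (k * n) - k * A c g n := by
  induction k with
  | zero => simp [A]
  | succ k ih =>
    have hp : (g ^ n) ^ k = g ^ (k * n) := by rw [← pow_mul, mul_comm]
    have hadd := A_add hco h1 g (k * n) n
    have h2 := A_succ c (g ^ n) k
    rw [h2, ih, hp]
    have h3 : (k + 1) * n = k * n + n := by ring
    rw [h3, hadd]
    push_cast
    ring

lemma abs_A_le {K : ℝ} (hK : ∀ g h : G, |c g h| ≤ K) (g : G) (n : ℕ) :
    |A c g n| ≤ n * K := by
  induction n with
  | zero => simp [A]
  | succ n ih =>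
    rw [A_succ]
    calc |A c g n + c (g ^ n) g| ≤ |A c g n| + |c (g ^ n) g| := abs_add_le _ _
      _ ≤ n * K + K := add_le_add ih (hK _ _)
      _ = (n + 1 : ℕ) * K := by push_cast; ring

lemma tendsto_B (hco : ∀ g h k : G, c h k - c (g * h) k + c g (h * k) - c g h = 0)
    (h1 : ∀ g : G, c g 1 = 0) {K : ℝ} (hK : ∀ g h : G, |c g h| ≤ K) (g : G) :
    Tendsto (fun n : ℕ => A c g n / n) atTop (𝓝 (B c g)) := by
  have hK0 : (0 : ℝ) ≤ K := (abs_nonneg _).trans (hK 1 1)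
  set u : ℕ → ℝ := fun n => A c g n + K with hu
  have hsub : Subadditive u := by
    intro m n
    have hadd := A_add hco h1 g m n
    have h2 := (abs_le.1 (hK (g ^ m) (g ^ n))).2
    simp only [hu]
    linarith
  have hbdd : BddBelow (Set.range fun n : ℕ => u n / n) := by
    refine ⟨-K, ?_⟩
    rintro x ⟨n, rfl⟩
    rcases Nat.eq_zero_or_pos n with h | h
    · subst h
      simp only [hu, Nat.cast_zero, div_zero]
      linarith
    · have hA := (abs_le.1 (abs_A_le hK g n)).1
      have hn : (0 : ℝ) < n := by exact_mod_cast h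
      rw [le_div_iff₀ hn]
      simp only [hu]
      nlinarith
  have hlim := hsub.tendsto_lim hbdd
  have h3 : Tendsto (fun n : ℕ => u n / n - K / n) atTop (𝓝 (hsub.lim - 0)) :=
    hlim.sub (tendsto_const_div_atTop_nhds_zero_nat K)
  rw [sub_zero] at h3
  have h4 : Tendsto (fun n : ℕ => A c g n / n) atTop (𝓝 hsub.lim) := by
    refine h3.congr fun n => ?_
    simp only [hu]
    ring
  rwa [B, h4.limUnder_eq]

lemma abs_B_le (hco : ∀ g h k : G, c h k - c (g * h) k + c g (h * k) - c g h = 0)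
    (h1 : ∀ g : G, c g 1 = 0) {K : ℝ} (hK : ∀ g h : G, |c g h| ≤ K) (g : G) :
    |B c g| ≤ K := by
  have hK0 : (0 : ℝ) ≤ K := (abs_nonneg _).trans (hK 1 1)
  have h := (tendsto_B hco h1 hK g).abs
  refine le_of_tendsto h (Filter.Eventually.of_forall fun n => ?_)
  rcases Nat.eq_zero_or_pos n with hn | hn
  · subst hn; simp [hK0]
  · have hA := abs_A_le hK g n
    have hnp : (0 : ℝ) < n := by exact_mod_cast hn
    rw [abs_div, abs_of_pos hnp, div_le_iff₀ hnp]
    linarith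

lemma B_one (hco : ∀ g h k : G, c h k - c (g * h) k + c g (h * k) - c g h = 0)
    (h1 : ∀ g : G, c g 1 = 0) {K : ℝ} (hK : ∀ g h : G, |c g h| ≤ K) :
    B c (1 : G) = 0 := by
  have h := tendsto_B hco h1 hK (1 : G)
  have h2 : Tendsto (fun n : ℕ => A c (1 : G) n / n) atTop (𝓝 0) := by
    have he : ∀ n : ℕ, A c (1 : G) n / n = 0 := by
      intro n; simp [A, h1]
    simpa [he] using (tendsto_const_nhds : Tendsto (fun _ : ℕ => (0 : ℝ)) atTop (𝓝 0))
  exact tendsto_nhds_unique h h2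

lemma B_pow (hco : ∀ g h k : G, c h k - c (g * h) k + c g (h * k) - c g h = 0)
    (h1 : ∀ g : G, c g 1 = 0) {K : ℝ} (hK : ∀ g h : G, |c g h| ≤ K) (g : G) (n : ℕ) :
    B c (g ^ n) = n * B c g - A c g n := by
  rcases Nat.eq_zero_or_pos n with rfl | hn
  · simp [A, B_one hco h1 hK]
  · have h2 := tendsto_B hco h1 hK (g ^ n)
    have hcomp : Tendsto (fun k : ℕ => k * n) atTop atTop :=
      tendsto_atTop_atTop.2 fun b => ⟨b, fun a ha => le_trans ha (Nat.le_mul_of_pos_right a hn)⟩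
    have h3 : Tendsto (fun k : ℕ => A c g (k * n) / ((k * n : ℕ) : ℝ)) atTop (𝓝 (B c g)) :=
      (tendsto_B hco h1 hK g).comp hcomp
    have h4 : Tendsto (fun k : ℕ => (n : ℝ) * (A c g (k * n) / ((k * n : ℕ) : ℝ)) - A c g n)
        atTop (𝓝 ((n : ℝ) * B c g - A c g n)) := (h3.const_mul _).sub tendsto_const_nhds
    have h5 : (fun k : ℕ => (n : ℝ) * (A c g (k * n) / ((k * n : ℕ) : ℝ)) - A c g n)
        =ᶠ[atTop] fun k : ℕ => A c (g ^ n) k / k := by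
      filter_upwards [eventually_ge_atTop 1] with k hk
      have hk0 : (k : ℝ) ≠ 0 := by positivity
      have hn0 : (n : ℝ) ≠ 0 := by positivity
      rw [A_pow hco h1]
      push_cast
      field_simp
    exact tendsto_nhds_unique h2 (h4.congr' h5)

end Stmt4Aux

/-- every bounded 2-cocycle is cohomologous, via the coboundary of a bounded
function, to a unique homogeneous bounded 2-cocycle. -/
theorem stmt_4 {G : Type*} [Group G] (c : G → G → ℝ) (hc : IsBounded2Cocycle c) :
    ∃! cx : G → G → ℝ,
      IsBounded2Cocycle cx ∧ IsHomogeneous2Cocycle cx ∧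
      ∃ b : G → ℝ, (∃ k : ℝ, ∀ g : G, |b g| ≤ k) ∧
        ∀ g h : G, c g h - cx g h = b h - b (g * h) + b g := by
  obtain ⟨⟨K, hK⟩, hco, h1, h1'⟩ := hc
  set b : G → ℝ := Stmt4Aux.B c with hb
  set cx : G → G → ℝ := fun g h => c g h - (b h - b (g * h) + b g) with hcx
  have hbK : ∀ g : G, |b g| ≤ K := fun g => Stmt4Aux.abs_B_le hco h1 hK g
  have hb1 : b 1 = 0 := Stmt4Aux.B_one hco h1 hK
  have hbpow : ∀ (g : G) (n : ℕ), b (g ^ n) = n * b g - Stmt4Aux.A c g n :=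
    fun g n => Stmt4Aux.B_pow hco h1 hK g n
  have hcx_hom : ∀ (g : G) (n m : ℕ), cx (g ^ n) (g ^ m) = 0 := by
    intro g n m
    have e1 := hbpow g n
    have e2 := hbpow g m
    have e3 := hbpow g (n + m)
    have hA := Stmt4Aux.A_add hco h1 g n m
    push_cast at e3
    simp only [hcx, ← pow_add]
    linarith
  have hdb : ∀ g h : G, c g h - cx g h = b h - b (g * h) + b g := by
    intro g h; simp only [hcx]; ring
  refine ⟨cx, ⟨⟨⟨K + (K + K + K), fun g h => ?_⟩, fun g h k => ?_, fun g => ?_, fun g => ?_⟩,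
    hcx_hom, b, ⟨K, hbK⟩, hdb⟩, ?_⟩
  · have ha := abs_le.1 (hK g h)
    have hb1' := abs_le.1 (hbK g)
    have hb2' := abs_le.1 (hbK h)
    have hb3' := abs_le.1 (hbK (g * h))
    simp only [hcx]
    rw [abs_le]
    constructor <;> linarith
  · have := hco g h k
    simp only [hcx, mul_assoc]
    linarith
  · simp [hcx, h1, hb1]
  · simp [hcx, h1', hb1]
  · rintro y ⟨⟨⟨Ky, hKy⟩, hcoy, hy1, hy1'⟩, hyhom, b', ⟨Kb', hKb'⟩, hy⟩
    set β : G → ℝ := fun g => b g - b' g with hβdef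
    have hrel : ∀ g h : G, y g h - cx g h = β h - β (g * h) + β g := by
      intro g h
      have e1 := hdb g h
      have e2 := hy g h
      simp only [hβdef]
      linarith
    have hβ : ∀ (g : G) (n m : ℕ), β (g ^ m) - β (g ^ (n + m)) + β (g ^ n) = 0 := by
      intro g n m
      have := hrel (g ^ n) (g ^ m)
      rw [hyhom g n m, hcx_hom g n m, ← pow_add] at this
      linarith
    have hβ1 : β 1 = 0 := by simpa using hβ 1 0 0
    have hβpow : ∀ (g : G) (n : ℕ), β (g ^ n) = n * β g := by
      intro g n
      induction n with
      | zero => simpa using hβ1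
      | succ n ih =>
        have := hβ g n 1
        rw [pow_one] at this
        push_cast
        linarith
    have hβbd : ∀ g : G, |β g| ≤ K + Kb' := by
      intro g
      have h2 := abs_le.1 (hbK g)
      have h3 := abs_le.1 (hKb' g)
      simp only [hβdef]
      rw [abs_le]
      constructor <;> linarith
    have hβ0 : ∀ g : G, β g = 0 := by
      intro g
      by_contra hne
      obtain ⟨n, hn⟩ := exists_nat_gt ((K + Kb') / |β g|)
      have h1n := hβbd (g ^ n)
      rw [hβpow g n, abs_mul, Nat.abs_cast] at h1n
      have hb0 : 0 < |β g| := abs_pos.2 hne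
      rw [div_lt_iff₀ hb0] at hn
      linarith
    funext g h
    have := hrel g h
    rw [hβ0 g, hβ0 h, hβ0 (g * h)] at this
    linarith
end

section
/- Let G be a group and let c be a homogeneous bounded 2-cocycle on G. If c = db for some bounded function b : G → ℝ (i.e. the bounded cohomology class of c vanishes), then c = 0 identically. -/
/-- a homogeneous bounded 2-cocycle which is the coboundary of a bounded
function vanishes identically. -/
theorem stmt_5 {G : Type*} [Group G] (c : G → G → ℝ)
    (hc : IsBounded2Cocycle c) (hhom : IsHomogeneous2Cocycle c)
    (b : G → ℝ) (hb_bdd : ∃ k : ℝ, ∀ g : G, |b g| ≤ k)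
    (hcb : ∀ g h : G, c g h = b h - b (g * h) + b g) :
    ∀ g h : G, c g h = 0 := by
  obtain ⟨k, hk⟩ := hb_bdd
  have hb1 : b 1 = 0 := by
    have := hhom 1 0 0
    simpa [hcb] using this
  have hbn : ∀ (g : G) (n : ℕ), b (g ^ n) = n * b g := by
    intro g n
    induction n with
    | zero => simpa using hb1
    | succ n ih =>
      have h := hhom g n 1
      rw [hcb] at h
      have : b (g ^ n * g ^ 1) = b (g ^ 1) + b (g ^ n) := by linarith
      rw [show g ^ (n + 1) = g ^ n * g ^ 1 by rw [pow_succ, pow_one], this, ih, pow_one]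
      push_cast; ring
  have hb0 : ∀ g : G, b g = 0 := by
    intro g
    by_contra h
    obtain ⟨n, hn⟩ := exists_nat_gt (k / |b g|)
    have hbg : 0 < |b g| := abs_pos.mpr h
    have := hk (g ^ n)
    rw [hbn, abs_mul, Nat.abs_cast] at this
    have : (n : ℝ) ≤ k / |b g| := by
      rw [le_div_iff₀ hbg]; exact this
    linarith
  intro g h
  rw [hcb, hb0, hb0, hb0]; ring
end

section
/- Let G be a group. (1) If c' is a bounded 2-cocycle on G, α is an automorphism of G, and c'_x is the homogeneous bounded 2-cocycle representing c' (the unique homogeneous bounded 2-cocycle with c' − c'_x a coboundary of a bounded function), then c'_x ∘ (α × α) is the homogeneous bounded 2-cocycle representing c' ∘ (α × α). (2) In particular every homogeneous bounded 2-cocycle c on G is invariant under conjugation: c(g₀ g g₀⁻¹, g₀ h g₀⁻¹) = c(g, h) for all g₀, g, h ∈ G. -/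
/-- Explicit coboundary for conjugation: for any 2-cocycle `c`,
`c(tgt⁻¹, tht⁻¹) - c(g,h)` is the coboundary of `x ↦ c(txt⁻¹)t - c t x`. -/
lemma conj_coboundary {G : Type*} [Group G] (c : G → G → ℝ)
    (hco : ∀ g h k : G, c h k - c (g * h) k + c g (h * k) - c g h = 0) (t g h : G) :
    c (t * g * t⁻¹) (t * h * t⁻¹) - c g h =
      (c (t * h * t⁻¹) t - c t h) - (c (t * (g * h) * t⁻¹) t - c t (g * h))
        + (c (t * g * t⁻¹) t - c t g) := by
  have E1 := hco (t * g * t⁻¹) t h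
  have e1 : t * g * t⁻¹ * t = t * g := by group
  rw [e1] at E1
  have E2 := hco (t * g * t⁻¹) (t * h * t⁻¹) t
  have e2 : t * g * t⁻¹ * (t * h * t⁻¹) = t * (g * h) * t⁻¹ := by group
  have e2' : t * h * t⁻¹ * t = t * h := by group
  rw [e2, e2'] at E2
  have E3 := hco t g h
  linarith

/-- A bounded function on `G` additive along powers is zero. -/
lemma bdd_zero {G : Type*} [Group G] (b : G → ℝ) (k : ℝ) (hk : ∀ g, |b g| ≤ k)
    (h1 : b 1 = 0) (hadd : ∀ (g : G) (n : ℕ), b (g ^ (n + 1)) = b (g ^ n) + b g) :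
    ∀ g, b g = 0 := by
  intro g
  have hpow : ∀ n : ℕ, b (g ^ n) = n * b g := by
    intro n
    induction n with
    | zero => simpa using h1
    | succ n ih => rw [hadd g n, ih]; push_cast; ring
  by_contra hne
  have hpos : 0 < |b g| := abs_pos.2 hne
  obtain ⟨n, hn⟩ := exists_nat_gt (k / |b g|)
  have : (n : ℝ) * |b g| ≤ k := by
    have := hk (g ^ n)
    rwa [hpow, abs_mul, abs_of_nonneg (by positivity : (0:ℝ) ≤ (n:ℝ))] at this
  have : k / |b g| ≥ n := by
    rw [ge_iff_le, le_div_iff₀ hpos]; exact this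
  linarith

/-- (1) pulling back the homogeneous representative of a bounded 2-cocycle
along an automorphism gives the homogeneous representative of the pullback; (2) in
particular homogeneous bounded 2-cocycles are conjugation-invariant. -/
theorem stmt_6 {G : Type*} [Group G] :
    (∀ (c' : G → G → ℝ) (α : G ≃* G) (c'x : G → G → ℝ),
      IsBounded2Cocycle c' →
      IsBounded2Cocycle c'x → IsHomogeneous2Cocycle c'x →
      (∃ b : G → ℝ, (∃ k : ℝ, ∀ g : G, |b g| ≤ k) ∧
        ∀ g h : G, c' g h - c'x g h = b h - b (g * h) + b g) →
      (IsBounded2Cocycle (fun g h => c'x (α g) (α h)) ∧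
        IsHomogeneous2Cocycle (fun g h => c'x (α g) (α h)) ∧
        ∃ b : G → ℝ, (∃ k : ℝ, ∀ g : G, |b g| ≤ k) ∧
          ∀ g h : G, c' (α g) (α h) - c'x (α g) (α h) = b h - b (g * h) + b g)) ∧
    (∀ c : G → G → ℝ, IsBounded2Cocycle c → IsHomogeneous2Cocycle c →
      ∀ g₀ g h : G, c (g₀ * g * g₀⁻¹) (g₀ * h * g₀⁻¹) = c g h) := by
  constructor
  · rintro c' α c'x _hc' ⟨⟨k, hk⟩, hco, hn1, hn2⟩ hhom ⟨b, ⟨kb, hkb⟩, hb⟩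
    refine ⟨⟨⟨k, fun g h => hk _ _⟩, ?_, ?_, ?_⟩, ?_, ⟨b ∘ α, ⟨kb, fun g => hkb _⟩, ?_⟩⟩
    · intro g h j; simpa [map_mul] using hco (α g) (α h) (α j)
    · intro g; simpa using hn1 (α g)
    · intro g; simpa using hn2 (α g)
    · intro g n m; simpa [map_pow] using hhom (α g) n m
    · intro g h; simpa [map_mul] using hb (α g) (α h)
  · rintro c ⟨⟨k, hk⟩, hco, hn1, hn2⟩ hhom t g h
    set b : G → ℝ := fun x => c (t * x * t⁻¹) t - c t x with hbdef
    have key : ∀ g h : G, c (t * g * t⁻¹) (t * h * t⁻¹) - c g h =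
        b h - b (g * h) + b g := fun g h => conj_coboundary c hco t g h
    have hb1 : b 1 = 0 := by simp [hbdef, hn1, hn2]
    have hbk : ∀ x, |b x| ≤ k + k := by
      intro x
      calc |b x| ≤ |c (t * x * t⁻¹) t| + |c t x| := abs_sub _ _
        _ ≤ k + k := add_le_add (hk _ _) (hk _ _)
    have hadd : ∀ (g : G) (n : ℕ), b (g ^ (n + 1)) = b (g ^ n) + b g := by
      intro g n
      have := key g (g ^ n)
      have hc1 : c g (g ^ n) = 0 := by simpa using hhom g 1 n
      have hc2 : c (t * g * t⁻¹) (t * g ^ n * t⁻¹) = 0 := by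
        have : t * g ^ n * t⁻¹ = (t * g * t⁻¹) ^ n := by
          rw [conj_pow]
        rw [this]
        simpa using hhom (t * g * t⁻¹) 1 n
      rw [hc1, hc2] at this
      have hgp : g * g ^ n = g ^ (n + 1) := by rw [pow_succ']
      rw [hgp] at this
      linarith
    have hb0 : ∀ x, b x = 0 := bdd_zero b (k + k) hbk hb1 hadd
    have := key g h
    rw [hb0, hb0, hb0] at this
    linarith
end

section
/- Let G be a group. (1) For every g ∈ G and every bounded function b : G → ℝ, Σ_{(u,v)∈G×G} m(g)(u,v)·(b(v) − b(uv) + b(u)) = b(g); moreover ‖m(g)‖₁ = 1. (2) Consequently, for every z ∈ ℓ¹(G) (the Banach space of absolutely summable real families on G) there exists w ∈ ℓ¹(G×G) with ‖w‖₁ ≤ ‖z‖₁ such that Σ_{g∈G} z(g)·b(g) = Σ_{(u,v)∈G×G} w(u,v)·(b(v) − b(uv) + b(u)) for every bounded function b : G → ℝ. (This expresses the vanishing of the first ℓ¹-homology H₁^{ℓ¹}(G, ℝ) = 0.) -/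
noncomputable section

open scoped ENNReal

instance : Fact ((1 : ℝ≥0∞) ≤ 1) := ⟨le_rfl⟩

/-- Dirac element of `ℓ¹(G×G)`. -/
def dirac {G : Type*} [Group G] (x : G × G) : lp (fun _ : G × G => ℝ) 1 :=
  letI := Classical.decEq (G × G)
  lp.single 1 x 1

/-- `m(g) = Σ_{n≥1} 2⁻ⁿ · δ_{(g^{2^{n-1}}, g^{2^{n-1}})} ∈ ℓ¹(G×G)`. -/
def mm {G : Type*} [Group G] (g : G) : lp (fun _ : G × G => ℝ) 1 :=
  ∑' n : ℕ, ((1 : ℝ) / 2) ^ (n + 1) • dirac (g ^ 2 ^ n, g ^ 2 ^ n)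

section Pairing

variable {α : Type*}

lemma lp_one_hasSum (f : lp (fun _ : α => ℝ) 1) :
    HasSum (fun x => |f x|) ‖f‖ := by
  have h := lp.hasSum_norm (p := 1) (by norm_num) f
  simpa [Real.rpow_one, Real.norm_eq_abs] using h

lemma pair_summable (c : α → ℝ) (k : ℝ) (hc : ∀ x, |c x| ≤ k)
    (f : lp (fun _ : α => ℝ) 1) : Summable fun x => f x * c x := by
  refine Summable.of_norm (Summable.of_nonneg_of_le (fun x => norm_nonneg _) (fun x => ?_)
    ((lp_one_hasSum f).summable.mul_right k))
  calc ‖f x * c x‖ = |f x| * |c x| := abs_mul _ _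
    _ ≤ |f x| * k := mul_le_mul_of_nonneg_left (hc x) (abs_nonneg _)

lemma pair_abs_le (c : α → ℝ) (k : ℝ) (hc : ∀ x, |c x| ≤ k)
    (f : lp (fun _ : α => ℝ) 1) : |∑' x, f x * c x| ≤ k * ‖f‖ := by
  have hs1 : Summable fun x => ‖f x * c x‖ := by
    refine Summable.of_nonneg_of_le (fun x => norm_nonneg _) (fun x => ?_)
      ((lp_one_hasSum f).summable.mul_right k)
    calc ‖f x * c x‖ = |f x| * |c x| := abs_mul _ _
      _ ≤ |f x| * k := mul_le_mul_of_nonneg_left (hc x) (abs_nonneg _)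
  calc |∑' x, f x * c x| = ‖∑' x, f x * c x‖ := (Real.norm_eq_abs _).symm
    _ ≤ ∑' x, ‖f x * c x‖ := norm_tsum_le_tsum_norm hs1
    _ ≤ ∑' x, |f x| * k := by
        refine Summable.tsum_le_tsum (fun x => ?_) hs1 ((lp_one_hasSum f).summable.mul_right k)
        calc ‖f x * c x‖ = |f x| * |c x| := abs_mul _ _
          _ ≤ |f x| * k := mul_le_mul_of_nonneg_left (hc x) (abs_nonneg _)
    _ = ‖f‖ * k := ((lp_one_hasSum f).mul_right k).tsum_eq
    _ = k * ‖f‖ := mul_comm _ _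

def pairCLM (c : α → ℝ) (k : ℝ) (hc : ∀ x, |c x| ≤ k) :
    lp (fun _ : α => ℝ) 1 →L[ℝ] ℝ :=
  LinearMap.mkContinuous
    { toFun := fun f => ∑' x, f x * c x
      map_add' := fun f g => by
        simp only [lp.coeFn_add, Pi.add_apply, add_mul]
        exact Summable.tsum_add (pair_summable c k hc f) (pair_summable c k hc g)
      map_smul' := fun r f => by
        simp only [lp.coeFn_smul, Pi.smul_apply, smul_eq_mul, RingHom.id_apply, mul_assoc]
        exact tsum_mul_left }
    k (fun f => by simpa [Real.norm_eq_abs] using pair_abs_le c k hc f)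

@[simp] lemma pairCLM_apply (c : α → ℝ) (k : ℝ) (hc : ∀ x, |c x| ≤ k)
    (f : lp (fun _ : α => ℝ) 1) : pairCLM c k hc f = ∑' x, f x * c x := rfl

end Pairing

section Mm

variable {G : Type*} [Group G]

lemma pairCLM_dirac (c : G × G → ℝ) (k : ℝ) (hc : ∀ x, |c x| ≤ k) (x : G × G) :
    pairCLM c k hc (dirac x) = c x := by
  letI := Classical.decEq (G × G)
  rw [pairCLM_apply]
  rw [tsum_eq_single x]
  · show (lp.single 1 x 1 : (G × G) → ℝ) x * c x = c x
    rw [lp.single_apply_self, one_mul]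
  · intro y hy
    show (lp.single 1 x 1 : (G × G) → ℝ) y * c y = 0
    rw [lp.single_apply_ne _ _ _ hy, zero_mul]

lemma norm_dirac (x : G × G) : ‖dirac x‖ = 1 := by
  letI := Classical.decEq (G × G)
  have h := lp.norm_single (E := fun _ : G × G => ℝ) (p := 1) (by norm_num) x (1 : ℝ)
  simpa [dirac] using h

lemma summable_half : Summable (fun n : ℕ => ((1 : ℝ) / 2) ^ (n + 1)) := by
  simp only [pow_succ]
  exact (summable_geometric_of_lt_one (by norm_num) (by norm_num)).mul_right _

lemma tsum_half : ∑' n : ℕ, ((1 : ℝ) / 2) ^ (n + 1) = 1 := by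
  have h : ∑' n : ℕ, ((1 : ℝ) / 2) ^ n = 2 := by
    rw [tsum_geometric_of_lt_one (by norm_num) (by norm_num)]; norm_num
  simp only [pow_succ]
  rw [tsum_mul_right, h]; norm_num

lemma norm_term (g : G) (n : ℕ) :
    ‖((1 : ℝ) / 2) ^ (n + 1) • dirac (g ^ 2 ^ n, g ^ 2 ^ n)‖ = ((1 : ℝ) / 2) ^ (n + 1) := by
  rw [norm_smul, norm_dirac, mul_one, Real.norm_eq_abs, abs_of_pos (by positivity)]

lemma summable_term (g : G) :
    Summable (fun n : ℕ => ((1 : ℝ) / 2) ^ (n + 1) • dirac (g ^ 2 ^ n, g ^ 2 ^ n)) := by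
  apply Summable.of_norm
  simpa only [norm_term] using summable_half

lemma hasSum_mm (g : G) :
    HasSum (fun n : ℕ => ((1 : ℝ) / 2) ^ (n + 1) • dirac (g ^ 2 ^ n, g ^ 2 ^ n)) (mm g) :=
  (summable_term g).hasSum

lemma pairCLM_mm (c : G × G → ℝ) (k : ℝ) (hc : ∀ x, |c x| ≤ k) (g : G) :
    pairCLM c k hc (mm g) =
      ∑' n : ℕ, ((1 : ℝ) / 2) ^ (n + 1) * c (g ^ 2 ^ n, g ^ 2 ^ n) := by
  have h := (hasSum_mm g).mapL (pairCLM c k hc)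
  rw [← h.tsum_eq]
  refine tsum_congr fun n => ?_
  rw [map_smul, pairCLM_dirac, smul_eq_mul]

lemma norm_mm (g : G) : ‖mm g‖ = 1 := by
  have hle : ‖mm g‖ ≤ 1 := by
    have h1 : ‖mm g‖ ≤ ∑' n : ℕ, ‖((1 : ℝ) / 2) ^ (n + 1) • dirac (g ^ 2 ^ n, g ^ 2 ^ n)‖ := by
      rw [show mm g = _ from rfl]
      exact norm_tsum_le_tsum_norm (by simpa only [norm_term] using summable_half)
    calc ‖mm g‖ ≤ _ := h1
      _ = ∑' n : ℕ, ((1 : ℝ) / 2) ^ (n + 1) := tsum_congr (norm_term g)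
      _ = 1 := tsum_half
  have hge : 1 ≤ ‖mm g‖ := by
    have hc : ∀ x : G × G, |(1 : ℝ)| ≤ (1 : ℝ) := fun _ => by norm_num
    have h1 : pairCLM (fun _ : G × G => (1 : ℝ)) 1 hc (mm g) = 1 := by
      rw [pairCLM_mm]
      simpa only [mul_one] using tsum_half
    have h2 := pair_abs_le (fun _ : G × G => (1 : ℝ)) 1 hc (mm g)
    rw [show (∑' x : G × G, (mm g : (G × G) → ℝ) x * 1) =
        pairCLM (fun _ : G × G => (1 : ℝ)) 1 hc (mm g) from rfl, h1] at h2
    simpa using h2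
  linarith

lemma telescope_key (g : G) (b : G → ℝ) (k : ℝ) (hb : ∀ x, |b x| ≤ k) :
    ∑' n : ℕ, ((1 : ℝ) / 2) ^ (n + 1) *
      (b (g ^ 2 ^ n) - b (g ^ 2 ^ n * g ^ 2 ^ n) + b (g ^ 2 ^ n)) = b g := by
  set u : ℕ → ℝ := fun n => ((1 : ℝ) / 2) ^ n * b (g ^ 2 ^ n) with hu
  have hpow : ∀ n : ℕ, g ^ 2 ^ n * g ^ 2 ^ n = g ^ 2 ^ (n + 1) := by
    intro n; rw [← pow_add]; congr 1; ring
  have hterm : ∀ n : ℕ, ((1 : ℝ) / 2) ^ (n + 1) *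
      (b (g ^ 2 ^ n) - b (g ^ 2 ^ n * g ^ 2 ^ n) + b (g ^ 2 ^ n)) = u n - u (n + 1) := by
    intro n; rw [hpow n, hu]; ring
  have hgeo : Summable (fun n : ℕ => ((1 : ℝ) / 2) ^ n) :=
    summable_geometric_of_lt_one (by norm_num) (by norm_num)
  have husum : Summable u := by
    apply Summable.of_norm
    refine Summable.of_nonneg_of_le (fun n => norm_nonneg _) (fun n => ?_) (hgeo.mul_right k)
    calc ‖u n‖ = |((1 : ℝ) / 2) ^ n| * |b (g ^ 2 ^ n)| := abs_mul _ _
      _ ≤ |((1 : ℝ) / 2) ^ n| * k := mul_le_mul_of_nonneg_left (hb _) (abs_nonneg _)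
      _ = ((1 : ℝ) / 2) ^ n * k := by rw [abs_of_pos (by positivity)]
  have hu0 : Filter.Tendsto u Filter.atTop (nhds 0) := by
    refine squeeze_zero_norm (a := fun n => ((1 : ℝ) / 2) ^ n * k) (fun n => ?_) ?_
    ·
      calc ‖u n‖ = |((1 : ℝ) / 2) ^ n| * |b (g ^ 2 ^ n)| := abs_mul _ _
        _ ≤ |((1 : ℝ) / 2) ^ n| * k := mul_le_mul_of_nonneg_left (hb _) (abs_nonneg _)
        _ = ((1 : ℝ) / 2) ^ n * k := by rw [abs_of_pos (by positivity)]
    · have := (tendsto_pow_atTop_nhds_zero_of_lt_one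
        (by norm_num : (0:ℝ) ≤ 1/2) (by norm_num)).mul_const k
      simpa using this
  have hsum2 : Summable fun n => u n - u (n + 1) :=
    husum.sub ((summable_nat_add_iff 1).2 husum)
  calc ∑' n : ℕ, ((1 : ℝ) / 2) ^ (n + 1) *
        (b (g ^ 2 ^ n) - b (g ^ 2 ^ n * g ^ 2 ^ n) + b (g ^ 2 ^ n))
      = ∑' n : ℕ, (u n - u (n + 1)) := tsum_congr hterm
    _ = u 0 := by
        refine tendsto_nhds_unique hsum2.hasSum.tendsto_sum_nat ?_
        have heq : (fun n => ∑ i ∈ Finset.range n, (u i - u (i + 1))) =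
            fun n => u 0 - u n := funext fun n => Finset.sum_range_sub' u n
        rw [heq]
        simpa using tendsto_const_nhds.sub hu0
    _ = b g := by simp [hu]

lemma cobound (b : G → ℝ) (k : ℝ) (hb : ∀ x, |b x| ≤ k) :
    ∀ uv : G × G, |b uv.2 - b (uv.1 * uv.2) + b uv.1| ≤ k + k + k := fun uv => by
  calc |b uv.2 - b (uv.1 * uv.2) + b uv.1|
      ≤ |b uv.2 - b (uv.1 * uv.2)| + |b uv.1| := abs_add_le _ _
    _ ≤ (|b uv.2| + |b (uv.1 * uv.2)|) + |b uv.1| := by gcongr; exact abs_sub _ _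
    _ ≤ (k + k) + k := by gcongr <;> exact hb _

lemma part1a (g : G) (b : G → ℝ) (k : ℝ) (hb : ∀ x, |b x| ≤ k) :
    ∑' uv : G × G, mm g uv * (b uv.2 - b (uv.1 * uv.2) + b uv.1) = b g := by
  have h := pairCLM_mm (fun uv : G × G => b uv.2 - b (uv.1 * uv.2) + b uv.1)
    (k + k + k) (cobound b k hb) g
  rw [pairCLM_apply] at h
  rw [h]
  exact telescope_key g b k hb

end Mm

/-- `⟨db, m(g)⟩ = b(g)` for every bounded `b`, `‖m(g)‖₁ = 1`, and consequently
every `z ∈ ℓ¹(G)` pairs with each coboundary `db` through some `w ∈ ℓ¹(G×G)` with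
`‖w‖₁ ≤ ‖z‖₁` (the vanishing of `H₁^{ℓ¹}(G,ℝ)`). -/
theorem stmt_8 {G : Type*} [Group G] :
    (∀ g : G,
      (∀ b : G → ℝ, (∃ k : ℝ, ∀ x : G, |b x| ≤ k) →
        ∑' uv : G × G, mm g uv * (b uv.2 - b (uv.1 * uv.2) + b uv.1) = b g) ∧
      ‖mm g‖ = 1) ∧
    (∀ z : lp (fun _ : G => ℝ) 1,
      ∃ w : lp (fun _ : G × G => ℝ) 1, ‖w‖ ≤ ‖z‖ ∧
        ∀ b : G → ℝ, (∃ k : ℝ, ∀ x : G, |b x| ≤ k) →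
          ∑' g : G, z g * b g =
            ∑' uv : G × G, w uv * (b uv.2 - b (uv.1 * uv.2) + b uv.1)) := by
  constructor
  · intro g
    exact ⟨fun b ⟨k, hb⟩ => part1a g b k hb, norm_mm g⟩
  · intro z
    have hn : ∀ g : G, ‖z g • mm g‖ = |z g| := fun g => by
      rw [norm_smul, norm_mm, mul_one, Real.norm_eq_abs]
    have hns : Summable (fun g : G => ‖z g • mm g‖) := by
      simpa only [hn] using (lp_one_hasSum z).summable
    have hsw : Summable (fun g : G => z g • mm g) := Summable.of_norm hns
    refine ⟨∑' g : G, z g • mm g, ?_, ?_⟩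
    · calc ‖∑' g : G, z g • mm g‖ ≤ ∑' g : G, ‖z g • mm g‖ := norm_tsum_le_tsum_norm hns
        _ = ∑' g : G, |z g| := tsum_congr hn
        _ = ‖z‖ := (lp_one_hasSum z).tsum_eq
    · rintro b ⟨k, hb⟩
      set c : G × G → ℝ := fun uv => b uv.2 - b (uv.1 * uv.2) + b uv.1 with hcdef
      have hc := cobound b k hb
      have h := (hsw.hasSum.mapL (pairCLM c (k + k + k) hc)).tsum_eq
      rw [show (∑' uv : G × G, (∑' g : G, z g • mm g : lp (fun _ : G × G => ℝ) 1) uv * c uv) =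
        pairCLM c (k + k + k) hc (∑' g : G, z g • mm g) from rfl, ← h]
      refine tsum_congr fun g => ?_
      rw [map_smul, smul_eq_mul]
      congr 1
      have h1 := pairCLM_mm c (k + k + k) hc g
      rw [pairCLM_apply] at h1
      rw [show pairCLM c (k + k + k) hc (mm g) =
        ∑' uv : G × G, (mm g : (G × G) → ℝ) uv * c uv from rfl, h1]
      exact (telescope_key g b k hb).symm

end
end

section
/- Let G be a group. For all g, h, k ∈ G, the element m₂(h,k) − m₂(gh,k) + m₂(g,hk) − m₂(g,h) of ℓ¹(G×G) belongs to the closure of the ℝ-linear span of B₂. (Hence the map (g,h) ↦ class of m₂(g,h) in the quotient of ℓ¹(G×G) by this closed subspace is a bounded 2-cocycle m̄₂ of G with values in the reduced ℓ¹-homology H̄₂^{ℓ¹}(G,ℝ), representing the class g₂.) -/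
noncomputable section

open scoped ENNReal

/-- `m₂(g,h) = δ_{(g,h)} − m(g) + m(gh) − m(h) ∈ ℓ¹(G×G)`. -/
def m2 {G : Type*} [Group G] (g h : G) : lp (fun _ : G × G => ℝ) 1 :=
  dirac (g, h) - mm g + mm (g * h) - mm h

/-- The set of boundary elements of `ℓ¹(G×G)`. -/
def B2 (G : Type*) [Group G] : Set (lp (fun _ : G × G => ℝ) 1) :=
  {x | ∃ a b k : G, x = dirac (b, k) - dirac (a * b, k) + dirac (a, b * k) - dirac (a, b)}

/-- the inhomogeneous coboundary of `m₂` takes values in the closure of the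
span of the boundaries `B₂`; hence `m₂` induces a bounded 2-cocycle with values in the
reduced ℓ¹-homology `H̄₂^{ℓ¹}(G,ℝ)`, representing the class `g₂`. -/
theorem stmt_10 {G : Type*} [Group G] (g h k : G) :
    m2 h k - m2 (g * h) k + m2 g (h * k) - m2 g h ∈
      closure ((Submodule.span ℝ (B2 G) : Submodule ℝ _) :
        Set (lp (fun _ : G × G => ℝ) 1)) := by
  have h1 : m2 h k - m2 (g * h) k + m2 g (h * k) - m2 g h =
      dirac (h, k) - dirac (g * h, k) + dirac (g, h * k) - dirac (g, h) := by
    simp only [m2, mul_assoc]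
    abel
  rw [h1]
  exact subset_closure (Submodule.subset_span ⟨g, h, k, rfl⟩)
end
end

section
/- Let (Ḡ, j, p) be a central extension of a group G by ℝ, s_x a section of p (with s_x(1)=1) with homogeneous associated cochain φ and bounded defect c_x, and let (Ψ, f) be an abstract kernel for groups Π and G. Define Ψ̄(α)(ḡ) := s_x(Ψ(α)(p(ḡ)))·j(φ(ḡ)) and F_x := s_x ∘ f. Then for every α ∈ Π: (0) Ψ̄(α) : Ḡ → Ḡ is a bijection fixing j(ℝ) pointwise; (1) p(Ψ̄(α)(ḡ)) = Ψ(α)(p(ḡ)) for all ḡ ∈ Ḡ; (2) φ(Ψ̄(α)(ḡ)) = φ(ḡ) for all ḡ ∈ Ḡ; (3) Ψ̄(α) ∘ i_{ḡ} = i_{Ψ̄(α)(ḡ)} ∘ Ψ̄(α) for all ḡ ∈ Ḡ; (4) Ψ̄(α) ∘ Ψ̄(β) = i_{F_x(α,β)} ∘ Ψ̄(αβ) for all β ∈ Π; (5) Ψ̄(α)(ḡ·z̄) = Ψ̄(α)(ḡ)·Ψ̄(α)(z̄) for all ḡ ∈ Ḡ and z̄ ∈ Z(Ḡ). -/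
/-- properties of the family of bijections `Ψ̄(α)` of a central extension `Ḡ`
of `G` by `ℝ` induced by an abstract kernel `(Ψ, f)` via a section with homogeneous
associated cochain and bounded defect. -/
theorem stmt_13 {G Gb P : Type*} [Group G] [Group Gb] [Group P]
    (j : ℝ → Gb) (p : Gb →* G)
    (hj_hom : ∀ t u : ℝ, j (t + u) = j t * j u)
    (hj_inj : Function.Injective j)
    (hj_cent : ∀ t : ℝ, j t ∈ Subgroup.center Gb)
    (hp_surj : Function.Surjective p)
    (hker : ∀ x : Gb, p x = 1 ↔ ∃ t : ℝ, j t = x)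
    (sx : G → Gb) (hsx : ∀ g : G, p (sx g) = g) (hsx1 : sx 1 = 1)
    (φ : Gb → ℝ) (hφ : ∀ x : Gb, x = sx (p x) * j (φ x))
    (hφ_hom : ∀ (x : Gb) (n : ℤ), φ (x ^ n) = n * φ x)
    (cx : G → G → ℝ) (hcx : ∀ g h : G, j (cx g h) = sx g * sx h * (sx (g * h))⁻¹)
    (hcx_bdd : ∃ k : ℝ, ∀ g h : G, |cx g h| ≤ k)
    -- abstract kernel (Ψ, f) for Π and G
    (Ψ : P → G ≃* G) (f : P → P → G)
    (hkernel : ∀ (α β : P) (g : G),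
      Ψ α (Ψ β g) = f α β * Ψ (α * β) g * (f α β)⁻¹)
    -- `Ψ̄(α)(ḡ) = s_x(Ψ(α)(p(ḡ)))·j(φ(ḡ))` and `F_x = s_x ∘ f`
    (Ψb : P → Gb → Gb) (hΨb : ∀ (α : P) (x : Gb), Ψb α x = sx (Ψ α (p x)) * j (φ x))
    (Fx : P → P → Gb) (hFx : ∀ α β : P, Fx α β = sx (f α β)) :
    ∀ α : P,
      -- (0)
      Function.Bijective (Ψb α) ∧ (∀ t : ℝ, Ψb α (j t) = j t) ∧
      -- (1)
      (∀ x : Gb, p (Ψb α x) = Ψ α (p x)) ∧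
      -- (2)
      (∀ x : Gb, φ (Ψb α x) = φ x) ∧
      -- (3)
      (∀ x y : Gb, Ψb α (x * y * x⁻¹) = Ψb α x * Ψb α y * (Ψb α x)⁻¹) ∧
      -- (4)
      (∀ (β : P) (x : Gb), Ψb α (Ψb β x) = Fx α β * Ψb (α * β) x * (Fx α β)⁻¹) ∧
      -- (5)
      (∀ x : Gb, ∀ z ∈ Subgroup.center Gb, Ψb α (x * z) = Ψb α x * Ψb α z) := by
  
  -- basic facts about j, p, sx, φ
  have hjc : ∀ (t : ℝ) (a : Gb), a * j t = j t * a := fun t a =>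
    Subgroup.mem_center_iff.mp (hj_cent t) a
  have hj0 : j 0 = 1 := by
    have h := hj_hom 0 0
    rw [add_zero] at h
    have h2 : j 0 * 1 = j 0 * j 0 := by rw [mul_one]; exact h
    exact (mul_left_cancel h2).symm
  have hpj : ∀ t : ℝ, p (j t) = 1 := fun t => (hker (j t)).mpr ⟨t, rfl⟩
  have hdecomp_p : ∀ (g : G) (t : ℝ), p (sx g * j t) = g := by
    intro g t
    rw [map_mul, hsx, hpj, mul_one]
  have hdecomp_φ : ∀ (g : G) (t : ℝ), φ (sx g * j t) = t := by
    intro g t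
    have h := hφ (sx g * j t)
    rw [hdecomp_p] at h
    exact (hj_inj (mul_left_cancel h)).symm
  have hφsx : ∀ g : G, φ (sx g) = 0 := by
    intro g
    have h := hdecomp_φ g 0
    rw [hj0, mul_one] at h
    exact h
  have hφj : ∀ t : ℝ, φ (j t) = t := by
    intro t
    have h := hdecomp_φ 1 t
    rw [hsx1, one_mul] at h
    exact h
  have hmuls : ∀ g h : G, sx g * sx h = sx (g * h) * j (cx g h) := by
    intro g h
    rw [hjc, hcx]
    group
  have hmul2 : ∀ (g h : G) (t u : ℝ),
      (sx g * j t) * (sx h * j u) = sx (g * h) * j (t + u + cx g h) := by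
    intro g h t u
    have e1 : (sx g * j t) * (sx h * j u) = (sx g * sx h) * (j t * j u) := by
      rw [mul_assoc, ← mul_assoc (j t), ← hjc t (sx h), mul_assoc (sx h), ← mul_assoc]
    rw [e1, hmuls, mul_assoc, ← hj_hom, ← hj_hom]
    congr 1
    ring_nf
  have hmul : ∀ x y : Gb, x * y = sx (p x * p y) * j (φ x + φ y + cx (p x) (p y)) := by
    intro x y
    conv_lhs => rw [hφ x, hφ y]
    exact hmul2 _ _ _ _
  have hφmul : ∀ x y : Gb, φ (x * y) = φ x + φ y + cx (p x) (p y) := by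
    intro x y
    conv_lhs => rw [hmul x y]
    rw [hdecomp_φ]
  have hφ_nat : ∀ (x : Gb) (n : ℕ), φ (x ^ n) = n * φ x := by
    intro x n
    have h := hφ_hom x n
    rw [zpow_natCast] at h
    simpa using h
  have hφ_inv : ∀ x : Gb, φ x⁻¹ = -φ x := by
    intro x
    have h := hφ_hom x (-1)
    simpa using h
  obtain ⟨k, hk⟩ := hcx_bdd
  have hk0 : (0 : ℝ) ≤ k := le_trans (abs_nonneg _) (hk 1 1)
  have key0 : ∀ c : ℝ, (∀ n : ℕ, |(n : ℝ) * c| ≤ 2 * k) → c = 0 := by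
    intro c hc
    by_contra h
    have hcpos : 0 < |c| := abs_pos.mpr h
    obtain ⟨n, hn⟩ := exists_nat_gt ((2 * k) / |c|)
    have h2 : 2 * k < (n : ℝ) * |c| := (div_lt_iff₀ hcpos).mp hn
    have h3 := hc n
    rw [abs_mul, Nat.abs_cast] at h3
    linarith
  have hconj : ∀ x y : Gb, φ (x * y * x⁻¹) = φ y := by
    intro x y
    have key : ∀ n : ℕ, (n : ℝ) * (φ (x * y * x⁻¹) - φ y)
        = cx (p x * p y ^ n) (p x)⁻¹ + cx (p x) (p y ^ n) := by
      intro n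
      have e1 : (x * y * x⁻¹) ^ n = x * y ^ n * x⁻¹ := conj_pow
      have e2 : φ ((x * y * x⁻¹) ^ n) = (n : ℝ) * φ (x * y * x⁻¹) := hφ_nat _ n
      rw [e1] at e2
      have e3 := hφmul (x * y ^ n) x⁻¹
      have e4 := hφmul x (y ^ n)
      have e5 := hφ_inv x
      have e6 := hφ_nat y n
      rw [map_mul, map_pow, map_inv] at e3
      rw [map_pow] at e4
      rw [e3, e4, e5, e6] at e2
      linarith
    have hb : ∀ n : ℕ, |(n : ℝ) * (φ (x * y * x⁻¹) - φ y)| ≤ 2 * k := by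
      intro n
      rw [key n]
      calc |cx (p x * p y ^ n) (p x)⁻¹ + cx (p x) (p y ^ n)|
          ≤ |cx (p x * p y ^ n) (p x)⁻¹| + |cx (p x) (p y ^ n)| := abs_add_le _ _
        _ ≤ 2 * k := by linarith [hk (p x * p y ^ n) (p x)⁻¹, hk (p x) (p y ^ n)]
    have := key0 _ hb
    linarith
  have hZcent : ∀ h : G, h ∈ Subgroup.center G → sx h ∈ Subgroup.center Gb := by
    intro h hh
    rw [Subgroup.mem_center_iff]
    intro y
    have hph : p y * h * (p y)⁻¹ = h := by
      rw [Subgroup.mem_center_iff.mp hh (p y), mul_inv_cancel_right]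
    have e : y * sx h * y⁻¹ = sx h := by
      have h1 := hφ (y * sx h * y⁻¹)
      rw [hconj y (sx h), hφsx, map_mul, map_mul, map_inv, hsx, hph, hj0, mul_one] at h1
      exact h1
    calc y * sx h = (y * sx h * y⁻¹) * y := by group
      _ = sx h * y := by rw [e]
  have hcent0 : ∀ g h : G, h ∈ Subgroup.center G → cx g h = 0 := by
    intro g h hh
    apply key0
    intro n
    have hcomm : Commute (sx g) (sx h) :=
      Subgroup.mem_center_iff.mp (hZcent h hh) (sx g)
    have e1 : (sx g * sx h) ^ n = (sx g) ^ n * (sx h) ^ n := hcomm.mul_pow n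
    have e2 : φ ((sx g * sx h) ^ n) = (n : ℝ) * φ (sx g * sx h) := hφ_nat _ n
    have e3 : φ (sx g * sx h) = cx g h := by
      rw [hφmul, hφsx, hφsx, hsx, hsx]; ring_nf
    have e4 := hφmul ((sx g) ^ n) ((sx h) ^ n)
    have e5 : φ ((sx g) ^ n) = 0 := by rw [hφ_nat, hφsx, mul_zero]
    have e6 : φ ((sx h) ^ n) = 0 := by rw [hφ_nat, hφsx, mul_zero]
    rw [map_pow, map_pow, hsx, hsx] at e4
    rw [e1, e4, e3, e5, e6] at e2
    have : (n : ℝ) * cx g h = cx (g ^ n) (h ^ n) := by linarith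
    rw [this]
    calc |cx (g ^ n) (h ^ n)| ≤ k := hk _ _
      _ ≤ 2 * k := by linarith
  have hΨcent : ∀ (α : P) (h : G), h ∈ Subgroup.center G → Ψ α h ∈ Subgroup.center G := by
    intro α h hh
    rw [Subgroup.mem_center_iff]
    intro g
    obtain ⟨w, rfl⟩ := (Ψ α).surjective g
    rw [← map_mul, ← map_mul, Subgroup.mem_center_iff.mp hh w]
  have h1 : ∀ (α : P) (x : Gb), p (Ψb α x) = Ψ α (p x) := by
    intro α x
    rw [hΨb, hdecomp_p]
  have h2 : ∀ (α : P) (x : Gb), φ (Ψb α x) = φ x := by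
    intro α x
    rw [hΨb, hdecomp_φ]
  intro α
  refine ⟨?_, ?_, h1 α, h2 α, ?_, ?_, ?_⟩
  · -- (0) bijective
    refine Function.bijective_iff_has_inverse.mpr
      ⟨fun x => sx ((Ψ α).symm (p x)) * j (φ x), ?_, ?_⟩
    · intro x
      simp only [h1, h2, MulEquiv.symm_apply_apply]
      exact (hφ x).symm
    · intro x
      rw [hΨb, hdecomp_p, hdecomp_φ, MulEquiv.apply_symm_apply]
      exact (hφ x).symm
  · -- (0) fixes j(ℝ)
    intro t
    rw [hΨb, hpj, map_one, hsx1, hφj, one_mul]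
  · -- (3)
    intro x y
    have hL : Ψb α (x * y * x⁻¹)
        = sx (Ψ α (p x) * Ψ α (p y) * (Ψ α (p x))⁻¹) * j (φ y) := by
      rw [hΨb]
      simp only [map_mul, map_inv, hconj]
    have hR : Ψb α x * Ψb α y * (Ψb α x)⁻¹
        = sx (Ψ α (p x) * Ψ α (p y) * (Ψ α (p x))⁻¹) * j (φ y) := by
      conv_lhs => rw [hφ (Ψb α x * Ψb α y * (Ψb α x)⁻¹)]
      simp only [map_mul, map_inv, h1, h2, hconj]
    rw [hL, hR]
  · -- (4)
    intro β x
    have hL : Ψb α (Ψb β x)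
        = sx (f α β * Ψ (α * β) (p x) * (f α β)⁻¹) * j (φ x) := by
      rw [hΨb, h1, h2, hkernel]
    have hR : Fx α β * Ψb (α * β) x * (Fx α β)⁻¹
        = sx (f α β * Ψ (α * β) (p x) * (f α β)⁻¹) * j (φ x) := by
      conv_lhs => rw [hφ (Fx α β * Ψb (α * β) x * (Fx α β)⁻¹)]
      simp only [hFx, map_mul, map_inv, hsx, h1, h2, hconj]
    rw [hL, hR]
  · -- (5)
    intro x z hz
    have hpz : p z ∈ Subgroup.center G := by
      rw [Subgroup.mem_center_iff]
      intro g
      obtain ⟨w, rfl⟩ := hp_surj g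
      rw [← map_mul, ← map_mul, Subgroup.mem_center_iff.mp hz w]
    have hL : Ψb α (x * z) = sx (Ψ α (p x * p z)) * j (φ x + φ z) := by
      rw [hΨb, map_mul, hφmul, hcent0 (p x) (p z) hpz, add_zero]
    have hR : Ψb α x * Ψb α z = sx (Ψ α (p x * p z)) * j (φ x + φ z) := by
      rw [hΨb, hΨb, hmul2, hcent0 _ _ (hΨcent α _ hpz), add_zero, ← map_mul]
    rw [hL, hR]
end

section
/- Let (Ḡ, j, p) be a central extension of a group G by ℝ, s_x a section of p (with s_x(1)=1) with homogeneous associated cochain φ and bounded defect c_x, (Ψ, f) an abstract kernel for Π and G, and Ψ̄(α)(ḡ) := s_x(Ψ(α)(p(ḡ)))·j(φ(ḡ)). Then for all α ∈ Π and ḡ, h̄ ∈ Ḡ: Ψ̄(α)(ḡ)·Ψ̄(α)(h̄) = Ψ̄(α)(ḡ·h̄)·j( c_x(Ψ(α)(p(ḡ)), Ψ(α)(p(h̄))) − c_x(p(ḡ), p(h̄)) ). Consequently, Ψ̄(α) is a group automorphism of Ḡ if and only if c_x(Ψ(α)(g), Ψ(α)(h)) = c_x(g,h) for all g, h ∈ G.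 -/
/-- the deviation of `Ψ̄(α)` from being multiplicative is measured by the
difference of `c_x` and its pullback by `Ψ(α)`; hence `Ψ̄(α)` is an automorphism of `Ḡ`
iff `c_x` is `Ψ(α)`-invariant. -/
theorem stmt_14 {G Gb P : Type*} [Group G] [Group Gb] [Group P]
    (j : ℝ → Gb) (p : Gb →* G)
    (hj_hom : ∀ t u : ℝ, j (t + u) = j t * j u)
    (hj_inj : Function.Injective j)
    (hj_cent : ∀ t : ℝ, j t ∈ Subgroup.center Gb)
    (hp_surj : Function.Surjective p)
    (hker : ∀ x : Gb, p x = 1 ↔ ∃ t : ℝ, j t = x)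
    (sx : G → Gb) (hsx : ∀ g : G, p (sx g) = g) (hsx1 : sx 1 = 1)
    (φ : Gb → ℝ) (hφ : ∀ x : Gb, x = sx (p x) * j (φ x))
    (hφ_hom : ∀ (x : Gb) (n : ℤ), φ (x ^ n) = n * φ x)
    (cx : G → G → ℝ) (hcx : ∀ g h : G, j (cx g h) = sx g * sx h * (sx (g * h))⁻¹)
    (hcx_bdd : ∃ k : ℝ, ∀ g h : G, |cx g h| ≤ k)
    (Ψ : P → G ≃* G) (f : P → P → G)
    (hkernel : ∀ (α β : P) (g : G),
      Ψ α (Ψ β g) = f α β * Ψ (α * β) g * (f α β)⁻¹)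
    (Ψb : P → Gb → Gb) (hΨb : ∀ (α : P) (x : Gb), Ψb α x = sx (Ψ α (p x)) * j (φ x)) :
    ∀ α : P,
      (∀ x y : Gb, Ψb α x * Ψb α y =
        Ψb α (x * y) * j (cx (Ψ α (p x)) (Ψ α (p y)) - cx (p x) (p y))) ∧
      ((Function.Bijective (Ψb α) ∧ ∀ x y : Gb, Ψb α (x * y) = Ψb α x * Ψb α y) ↔
        (∀ g h : G, cx (Ψ α g) (Ψ α h) = cx g h)) := by

  -- preliminaries
  have hj1 : j 0 = 1 := by
    have h := hj_hom 0 0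
    rw [add_zero] at h
    exact (mul_left_cancel (a := j 0) (by rw [mul_one, ← h])).symm
  have comm : ∀ (t : ℝ) (a : Gb), j t * a = a * j t := fun t a =>
    ((Subgroup.mem_center_iff.mp (hj_cent t)) a).symm
  have pj1 : ∀ t : ℝ, p (j t) = 1 := fun t => (hker (j t)).mpr ⟨t, rfl⟩
  have p_form : ∀ (g : G) (t : ℝ), p (sx g * j t) = g := by
    intro g t
    rw [map_mul, hsx, pj1, mul_one]
  have φ_form : ∀ (g : G) (t : ℝ), φ (sx g * j t) = t := by
    intro g t
    have h := hφ (sx g * j t)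
    rw [p_form] at h
    exact (hj_inj (mul_left_cancel h.symm))
  have mul_form : ∀ (g h : G) (t u : ℝ),
      (sx g * j t) * (sx h * j u) = sx (g * h) * j (cx g h + t + u) := by
    intro g h t u
    have hgh : sx g * sx h = sx (g * h) * j (cx g h) := by
      rw [← comm, hcx, inv_mul_cancel_right]
    calc (sx g * j t) * (sx h * j u)
        = (sx g * sx h) * (j t * j u) := by
          rw [mul_assoc, ← mul_assoc (j t), comm, mul_assoc, ← mul_assoc]
      _ = sx (g * h) * j (cx g h + t + u) := by
          rw [hgh, ← hj_hom, mul_assoc, ← hj_hom, add_assoc]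
  have φ_mul : ∀ x y : Gb, φ (x * y) = cx (p x) (p y) + φ x + φ y := by
    intro x y
    calc φ (x * y) = φ ((sx (p x) * j (φ x)) * (sx (p y) * j (φ y))) := by
          rw [← hφ x, ← hφ y]
      _ = φ (sx (p x * p y) * j (cx (p x) (p y) + φ x + φ y)) := by rw [mul_form]
      _ = _ := φ_form _ _
  intro α
  have part1 : ∀ x y : Gb, Ψb α x * Ψb α y =
      Ψb α (x * y) * j (cx (Ψ α (p x)) (Ψ α (p y)) - cx (p x) (p y)) := by
    intro x y
    rw [hΨb, hΨb, hΨb, mul_form, map_mul, map_mul, mul_assoc, ← hj_hom, φ_mul]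
    congr 1
    ring
  refine ⟨part1, ?_, ?_⟩
  · rintro ⟨-, hmul⟩ g h
    have h1 := part1 (sx g) (sx h)
    rw [hmul] at h1
    have h2 : (1 : Gb) = j (cx (Ψ α (p (sx g))) (Ψ α (p (sx h))) - cx (p (sx g)) (p (sx h))) :=
      mul_left_cancel (a := Ψb α (sx g) * Ψb α (sx h)) (by rw [mul_one]; exact h1)
    have h3 := hj_inj (h2.symm.trans hj1.symm)
    rw [hsx, hsx] at h3
    linarith [sub_eq_zero.mp h3]
  · intro hinv
    constructor
    · apply Function.bijective_iff_has_inverse.mpr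
      refine ⟨fun y => sx ((Ψ α).symm (p y)) * j (φ y), ?_, ?_⟩
      · intro x
        show sx ((Ψ α).symm (p (Ψb α x))) * j (φ (Ψb α x)) = x
        rw [hΨb, p_form, φ_form, MulEquiv.symm_apply_apply, ← hφ]
      · intro y
        show Ψb α (sx ((Ψ α).symm (p y)) * j (φ y)) = y
        rw [hΨb, p_form, φ_form, MulEquiv.apply_symm_apply, ← hφ]
    · intro x y
      rw [part1, hinv, sub_self, hj1, mul_one]
end

section
/- Let (Ḡ, j, p) be a central extension of a group G by ℝ, s_x a section of p (with s_x(1)=1) with homogeneous associated cochain φ and bounded defect c_x, (Ψ, f) an abstract kernel for Π and G, Ψ̄(α)(ḡ) := s_x(Ψ(α)(p(ḡ)))·j(φ(ḡ)), and F_x := s_x ∘ f. Define K(α,β,γ) := Ψ̄(α)(F_x(β,γ))·F_x(α,βγ)·F_x(αβ,γ)⁻¹·F_x(α,β)⁻¹. Then for all α, β, γ ∈ Π: K(α,β,γ) lies in the center of Ḡ, and φ(K(α,β,γ)) = c_x(Ψ(α)(f(β,γ)), f(α,βγ)) − c_x(f(α,β), f(αβ,γ)). In particular the function (α,β,γ)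 ↦ φ(K(α,β,γ)) is bounded on Π³. -/
/-- the obstruction cochain `K(α,β,γ)` built from `Ψ̄` and `F_x = s_x ∘ f`
is central in `Ḡ`, its `φ`-component is the composition cochain
`c_x(Ψ(α)(f(β,γ)), f(α,βγ)) − c_x(f(α,β), f(αβ,γ))`, and the latter is bounded on `Π³`. -/
theorem stmt_15 {G Gb P : Type*} [Group G] [Group Gb] [Group P]
    (j : ℝ → Gb) (p : Gb →* G)
    (hj_hom : ∀ t u : ℝ, j (t + u) = j t * j u)
    (hj_inj : Function.Injective j)
    (hj_cent : ∀ t : ℝ, j t ∈ Subgroup.center Gb)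
    (hp_surj : Function.Surjective p)
    (hker : ∀ x : Gb, p x = 1 ↔ ∃ t : ℝ, j t = x)
    (sx : G → Gb) (hsx : ∀ g : G, p (sx g) = g) (hsx1 : sx 1 = 1)
    (φ : Gb → ℝ) (hφ : ∀ x : Gb, x = sx (p x) * j (φ x))
    (hφ_hom : ∀ (x : Gb) (n : ℤ), φ (x ^ n) = n * φ x)
    (cx : G → G → ℝ) (hcx : ∀ g h : G, j (cx g h) = sx g * sx h * (sx (g * h))⁻¹)
    (hcx_bdd : ∃ k : ℝ, ∀ g h : G, |cx g h| ≤ k)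
    (Ψ : P → G ≃* G) (f : P → P → G)
    (hkernel : ∀ (α β : P) (g : G),
      Ψ α (Ψ β g) = f α β * Ψ (α * β) g * (f α β)⁻¹)
    (Ψb : P → Gb → Gb) (hΨb : ∀ (α : P) (x : Gb), Ψb α x = sx (Ψ α (p x)) * j (φ x))
    (Fx : P → P → Gb) (hFx : ∀ α β : P, Fx α β = sx (f α β))
    (K : P → P → P → Gb)
    (hK : ∀ α β γ : P, K α β γ =
      Ψb α (Fx β γ) * Fx α (β * γ) * (Fx (α * β) γ)⁻¹ * (Fx α β)⁻¹) :
    (∀ α β γ : P, K α β γ ∈ Subgroup.center Gb) ∧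
    (∀ α β γ : P,
      φ (K α β γ) = cx (Ψ α (f β γ)) (f α (β * γ)) - cx (f α β) (f (α * β) γ)) ∧
    (∃ k : ℝ, ∀ α β γ : P, |φ (K α β γ)| ≤ k) := by
  obtain ⟨k, hk⟩ := hcx_bdd
  -- basic facts about j
  have hj0 : j 0 = 1 := by
    have h := hj_hom 0 0
    rw [add_zero] at h
    exact (left_eq_mul.mp h)
  have hpj : ∀ t : ℝ, p (j t) = 1 := fun t => (hker (j t)).mpr ⟨t, rfl⟩
  have hcomm_j : ∀ (t : ℝ) (z : Gb), z * j t = j t * z :=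
    fun t z => Subgroup.mem_center_iff.mp (hj_cent t) z
  have hjsub : ∀ s t : ℝ, j (s - t) = j s * (j t)⁻¹ := by
    intro s t
    have h : j (s - t) * j t = j s := by rw [← hj_hom]; congr 1; ring
    calc j (s - t) = j (s - t) * j t * (j t)⁻¹ := by group
      _ = j s * (j t)⁻¹ := by rw [h]
  -- φ basics
  have hφsx : ∀ g : G, φ (sx g) = 0 := by
    intro g
    have h := hφ (sx g)
    rw [hsx] at h
    have h1 : j (φ (sx g)) = 1 := (left_eq_mul.mp h)
    exact hj_inj (h1.trans hj0.symm)
  have hφ_eq : ∀ (z : Gb) (t : ℝ), z = sx (p z) * j t → φ z = t := by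
    intro z t hzt
    apply hj_inj
    have h : sx (p z) * j (φ z) = sx (p z) * j t := by rw [← hφ z, ← hzt]
    exact mul_left_cancel h
  have hφ_mulj : ∀ (z : Gb) (t : ℝ), φ (z * j t) = φ z + t := by
    intro z t
    apply hφ_eq
    have hp : p (z * j t) = p z := by rw [map_mul, hpj, mul_one]
    rw [hp, hj_hom, ← mul_assoc, ← hφ z]
  have hsxmul : ∀ g h : G, sx g * sx h = j (cx g h) * sx (g * h) := by
    intro g h
    rw [hcx]
    group
  have h_quasi : ∀ u v : Gb, φ (u * v) = cx (p u) (p v) + φ u + φ v := by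
    intro u v
    apply hφ_eq
    rw [map_mul]
    calc u * v = (sx (p u) * j (φ u)) * (sx (p v) * j (φ v)) := by rw [← hφ u, ← hφ v]
      _ = sx (p u) * (j (φ u) * sx (p v)) * j (φ v) := by group
      _ = sx (p u) * (sx (p v) * j (φ u)) * j (φ v) := by
            rw [← hcomm_j (φ u) (sx (p v))]
      _ = (sx (p u) * sx (p v)) * (j (φ u) * j (φ v)) := by group
      _ = (j (cx (p u) (p v)) * sx (p u * p v)) * j (φ u + φ v) := by
            rw [hsxmul, ← hj_hom]
      _ = (sx (p u * p v) * j (cx (p u) (p v))) * j (φ u + φ v) := by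
            rw [← hcomm_j (cx (p u) (p v)) (sx (p u * p v))]
      _ = sx (p u * p v) * (j (cx (p u) (p v)) * j (φ u + φ v)) := by rw [mul_assoc]
      _ = sx (p u * p v) * j (cx (p u) (p v) + (φ u + φ v)) := by rw [← hj_hom]
      _ = sx (p u * p v) * j (cx (p u) (p v) + φ u + φ v) := by rw [add_assoc]
  have hφ_nat : ∀ (z : Gb) (n : ℕ), φ (z ^ n) = n * φ z := by
    intro z n
    have h := hφ_hom z n
    rw [zpow_natCast] at h
    rw [h]
    push_cast
    ring
  have hφ_inv : ∀ z : Gb, φ z⁻¹ = - φ z := by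
    intro z
    have h := hφ_hom z (-1)
    rw [zpow_neg_one] at h
    rw [h]
    push_cast
    ring
  have harch : ∀ (C d : ℝ), (∀ n : ℕ, |(n : ℝ) * d| ≤ C) → d = 0 := by
    intro C d hd
    by_contra h
    obtain ⟨n, hn⟩ := exists_nat_gt (C / |d|)
    have hdpos : 0 < |d| := abs_pos.mpr h
    have h1 : C < n * |d| := (div_lt_iff₀ hdpos).mp hn
    have h2 := hd n
    rw [abs_mul, Nat.abs_cast] at h2
    linarith
  have hpow : ∀ (u v : Gb) (n : ℕ), (u * v * u⁻¹) ^ n = u * v ^ n * u⁻¹ := by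
    intro u v n
    induction n with
    | zero => simp
    | succ m ih => rw [pow_succ, pow_succ, ih]; group
  have h_conj : ∀ u v : Gb, φ (u * v * u⁻¹) = φ v := by
    intro u v
    have key : ∀ n : ℕ, (n : ℝ) * (φ (u * v * u⁻¹) - φ v)
        = cx (p (u * v ^ n)) (p u⁻¹) + cx (p u) (p (v ^ n)) := by
      intro n
      have h1 : φ ((u * v * u⁻¹) ^ n) = n * φ (u * v * u⁻¹) := hφ_nat _ n
      rw [hpow u v n] at h1
      have h2 : φ (u * v ^ n * u⁻¹) = cx (p (u * v ^ n)) (p u⁻¹) + φ (u * v ^ n) + φ u⁻¹ :=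
        h_quasi _ _
      have h3 : φ (u * v ^ n) = cx (p u) (p (v ^ n)) + φ u + φ (v ^ n) := h_quasi _ _
      have h4 : φ (v ^ n) = n * φ v := hφ_nat _ n
      have h5 : φ u⁻¹ = - φ u := hφ_inv u
      rw [h2, h3, h4, h5] at h1
      linarith
    have hb : ∀ n : ℕ, |(n : ℝ) * (φ (u * v * u⁻¹) - φ v)| ≤ k + k := by
      intro n
      rw [key n]
      exact (abs_add_le _ _).trans (add_le_add (hk _ _) (hk _ _))
    have h0 := harch (k + k) _ hb
    linarith
  have h_comm_add : ∀ u v : Gb, u * v = v * u → φ (u * v) = φ u + φ v := by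
    intro u v huv
    have hc : Commute u v := huv
    have key : ∀ n : ℕ, (n : ℝ) * (φ (u * v) - φ u - φ v) = cx (p (u ^ n)) (p (v ^ n)) := by
      intro n
      have h1 : φ ((u * v) ^ n) = n * φ (u * v) := hφ_nat _ n
      rw [hc.mul_pow n] at h1
      have h2 := h_quasi (u ^ n) (v ^ n)
      have h3 := hφ_nat u n
      have h4 := hφ_nat v n
      rw [h2, h3, h4] at h1
      linarith
    have hb : ∀ n : ℕ, |(n : ℝ) * (φ (u * v) - φ u - φ v)| ≤ k + k := by
      intro n
      rw [key n]
      have hkk : (0:ℝ) ≤ k := le_trans (abs_nonneg _) (hk 1 1)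
      have := hk (p (u ^ n)) (p (v ^ n))
      linarith [abs_nonneg (cx (p (u ^ n)) (p (v ^ n)))]
    have h0 := harch (k + k) _ hb
    linarith
  -- a preimage of a central element is central
  have h_central : ∀ w : Gb, (∀ g : G, p w * g = g * p w) → w ∈ Subgroup.center Gb := by
    intro w hw
    rw [Subgroup.mem_center_iff]
    intro v
    have hp1 : p (w * v * w⁻¹ * v⁻¹) = 1 := by
      rw [map_mul, map_mul, map_mul, map_inv, map_inv, hw (p v)]
      group
    obtain ⟨t, ht⟩ := (hker _).mp hp1
    have h1 : w * v * w⁻¹ = v * j t := by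
      calc w * v * w⁻¹ = (w * v * w⁻¹ * v⁻¹) * v := by group
        _ = j t * v := by rw [← ht]
        _ = v * j t := (hcomm_j t v).symm
    have h2 : φ (w * v * w⁻¹) = φ v := h_conj w v
    rw [h1, hφ_mulj] at h2
    have ht0 : t = 0 := by linarith
    have hjt1 : j t = 1 := by rw [ht0, hj0]
    rw [hjt1] at ht
    calc v * w = (w * v * w⁻¹ * v⁻¹)⁻¹ * (w * v) := by group
      _ = w * v := by rw [← ht]; group
  -- the main pointwise computation
  have main : ∀ α β γ : P, K α β γ ∈ Subgroup.center Gb ∧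
      φ (K α β γ) = cx (Ψ α (f β γ)) (f α (β * γ)) - cx (f α β) (f (α * β) γ) := by
    intro α β γ
    have hassoc : α * (β * γ) = α * β * γ := (mul_assoc α β γ).symm
    have h1 : ∀ g : G, Ψ α (Ψ β (Ψ γ g)) =
        f α β * (f (α * β) γ * Ψ (α * β * γ) g * (f (α * β) γ)⁻¹) * (f α β)⁻¹ := by
      intro g
      rw [hkernel α β (Ψ γ g), hkernel (α * β) γ g]
    have h2 : ∀ g : G, Ψ α (Ψ β (Ψ γ g)) =
        Ψ α (f β γ) * (f α (β * γ) * Ψ (α * β * γ) g * (f α (β * γ))⁻¹) * (Ψ α (f β γ))⁻¹ := by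
      intro g
      rw [hkernel β γ g, map_mul, map_mul, map_inv, hkernel α (β * γ) g, hassoc]
    have hconjG : ∀ g : G,
        (Ψ α (f β γ) * f α (β * γ)) * Ψ (α * β * γ) g * (Ψ α (f β γ) * f α (β * γ))⁻¹
        = (f α β * f (α * β) γ) * Ψ (α * β * γ) g * (f α β * f (α * β) γ)⁻¹ := by
      intro g
      have h3 := (h2 g).symm.trans (h1 g)
      calc (Ψ α (f β γ) * f α (β * γ)) * Ψ (α * β * γ) g * (Ψ α (f β γ) * f α (β * γ))⁻¹
          = Ψ α (f β γ) * (f α (β * γ) * Ψ (α * β * γ) g * (f α (β * γ))⁻¹) *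
              (Ψ α (f β γ))⁻¹ := by group
        _ = f α β * (f (α * β) γ * Ψ (α * β * γ) g * (f (α * β) γ)⁻¹) * (f α β)⁻¹ := h3
        _ = (f α β * f (α * β) γ) * Ψ (α * β * γ) g * (f α β * f (α * β) γ)⁻¹ := by group
    have hc : ∀ h : G,
        ((f α β * f (α * β) γ)⁻¹ * (Ψ α (f β γ) * f α (β * γ))) * h
        = h * ((f α β * f (α * β) γ)⁻¹ * (Ψ α (f β γ) * f α (β * γ))) := by
      intro h
      obtain ⟨g, hg⟩ := (Ψ (α * β * γ)).surjective h
      rw [← hg]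
      calc ((f α β * f (α * β) γ)⁻¹ * (Ψ α (f β γ) * f α (β * γ))) * Ψ (α * β * γ) g
          = (f α β * f (α * β) γ)⁻¹ *
              ((Ψ α (f β γ) * f α (β * γ)) * Ψ (α * β * γ) g *
                (Ψ α (f β γ) * f α (β * γ))⁻¹) *
              (Ψ α (f β γ) * f α (β * γ)) := by group
        _ = (f α β * f (α * β) γ)⁻¹ *
              ((f α β * f (α * β) γ) * Ψ (α * β * γ) g * (f α β * f (α * β) γ)⁻¹) *
              (Ψ α (f β γ) * f α (β * γ)) := by rw [hconjG g]
        _ = Ψ (α * β * γ) g *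
              ((f α β * f (α * β) γ)⁻¹ * (Ψ α (f β γ) * f α (β * γ))) := by group
    have hxy : (Ψ α (f β γ) * f α (β * γ)) * (f α β * f (α * β) γ)⁻¹
        = (f α β * f (α * β) γ)⁻¹ * (Ψ α (f β γ) * f α (β * γ)) := by
      have h4 := hc (f α β * f (α * β) γ)
      calc (Ψ α (f β γ) * f α (β * γ)) * (f α β * f (α * β) γ)⁻¹
          = ((f α β * f (α * β) γ) *
              ((f α β * f (α * β) γ)⁻¹ * (Ψ α (f β γ) * f α (β * γ)))) *
              (f α β * f (α * β) γ)⁻¹ := by group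
        _ = (((f α β * f (α * β) γ)⁻¹ * (Ψ α (f β γ) * f α (β * γ))) *
              (f α β * f (α * β) γ)) * (f α β * f (α * β) γ)⁻¹ := by rw [← h4]
        _ = (f α β * f (α * β) γ)⁻¹ * (Ψ α (f β γ) * f α (β * γ)) := by group
    have hZ : ∀ h : G,
        ((Ψ α (f β γ) * f α (β * γ)) * (f α β * f (α * β) γ)⁻¹) * h
        = h * ((Ψ α (f β γ) * f α (β * γ)) * (f α β * f (α * β) γ)⁻¹) := by
      intro h
      rw [hxy]
      exact hc h
    -- simplify K
    have hΨbF : Ψb α (Fx β γ) = sx (Ψ α (f β γ)) := by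
      rw [hΨb, hFx, hsx, hφsx, hj0, mul_one]
    have hKeq : K α β γ =
        (sx (Ψ α (f β γ) * f α (β * γ)) * (sx (f α β * f (α * β) γ))⁻¹) *
          j (cx (Ψ α (f β γ)) (f α (β * γ)) - cx (f α β) (f (α * β) γ)) := by
      rw [hK, hΨbF, hFx α (β * γ), hFx (α * β) γ, hFx α β, hjsub]
      calc sx (Ψ α (f β γ)) * sx (f α (β * γ)) * (sx (f (α * β) γ))⁻¹ * (sx (f α β))⁻¹
          = (sx (Ψ α (f β γ)) * sx (f α (β * γ))) *
              (sx (f α β) * sx (f (α * β) γ))⁻¹ := by group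
        _ = (j (cx (Ψ α (f β γ)) (f α (β * γ))) * sx (Ψ α (f β γ) * f α (β * γ))) *
              (j (cx (f α β) (f (α * β) γ)) * sx (f α β * f (α * β) γ))⁻¹ := by
              rw [hsxmul, hsxmul]
        _ = j (cx (Ψ α (f β γ)) (f α (β * γ))) *
              (sx (Ψ α (f β γ) * f α (β * γ)) * (sx (f α β * f (α * β) γ))⁻¹) *
              (j (cx (f α β) (f (α * β) γ)))⁻¹ := by group
        _ = (sx (Ψ α (f β γ) * f α (β * γ)) * (sx (f α β * f (α * β) γ))⁻¹) *
              j (cx (Ψ α (f β γ)) (f α (β * γ))) *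
              (j (cx (f α β) (f (α * β) γ)))⁻¹ := by
              rw [← hcomm_j (cx (Ψ α (f β γ)) (f α (β * γ)))
                (sx (Ψ α (f β γ) * f α (β * γ)) * (sx (f α β * f (α * β) γ))⁻¹)]
        _ = (sx (Ψ α (f β γ) * f α (β * γ)) * (sx (f α β * f (α * β) γ))⁻¹) *
              (j (cx (Ψ α (f β γ)) (f α (β * γ))) *
                (j (cx (f α β) (f (α * β) γ)))⁻¹) := by group
    have hpw : ∀ g : G,
        p (sx (Ψ α (f β γ) * f α (β * γ)) * (sx (f α β * f (α * β) γ))⁻¹) * g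
        = g * p (sx (Ψ α (f β γ) * f α (β * γ)) * (sx (f α β * f (α * β) γ))⁻¹) := by
      intro g
      rw [map_mul, map_inv, hsx, hsx]
      exact hZ g
    have hwc : sx (Ψ α (f β γ) * f α (β * γ)) * (sx (f α β * f (α * β) γ))⁻¹
        ∈ Subgroup.center Gb := h_central _ hpw
    constructor
    · rw [hKeq]
      exact Subgroup.mul_mem _ hwc (hj_cent _)
    · have h5 := Subgroup.mem_center_iff.mp hwc (sx (f α β * f (α * β) γ))
      have hcomm_xy : sx (Ψ α (f β γ) * f α (β * γ)) * sx (f α β * f (α * β) γ)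
          = sx (f α β * f (α * β) γ) * sx (Ψ α (f β γ) * f α (β * γ)) := by
        calc sx (Ψ α (f β γ) * f α (β * γ)) * sx (f α β * f (α * β) γ)
            = ((sx (Ψ α (f β γ) * f α (β * γ)) * (sx (f α β * f (α * β) γ))⁻¹) *
                sx (f α β * f (α * β) γ)) * sx (f α β * f (α * β) γ) := by group
          _ = (sx (f α β * f (α * β) γ) *
                (sx (Ψ α (f β γ) * f α (β * γ)) * (sx (f α β * f (α * β) γ))⁻¹)) *
                  sx (f α β * f (α * β) γ) := by rw [← h5]
          _ = sx (f α β * f (α * β) γ) * sx (Ψ α (f β γ) * f α (β * γ)) := by group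
      have hc7 : Commute (sx (Ψ α (f β γ) * f α (β * γ))) (sx (f α β * f (α * β) γ)) :=
        hcomm_xy
      have hφw : φ (sx (Ψ α (f β γ) * f α (β * γ)) * (sx (f α β * f (α * β) γ))⁻¹) = 0 := by
        rw [h_comm_add _ _ hc7.inv_right.eq, hφsx, hφ_inv, hφsx]
        ring
      rw [hKeq, hφ_mulj, hφw, zero_add]
  refine ⟨fun α β γ => (main α β γ).1, fun α β γ => (main α β γ).2, ⟨k + k, ?_⟩⟩
  intro α β γ
  rw [(main α β γ).2, sub_eq_add_neg]
  refine (abs_add_le _ _).trans ?_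
  rw [abs_neg]
  exact add_le_add (hk _ _) (hk _ _)
end

section
/- Let G and Π be groups, (Ψ, f) an abstract kernel for Π and G, and c a homogeneous bounded 2-cocycle on G. Then for all α, β, γ, ζ ∈ Π: e_c(β,γ,ζ) − e_c(αβ,γ,ζ) + e_c(α,βγ,ζ) − e_c(α,β,γζ) + e_c(α,β,γ) = e_c(β,γ,ζ) − e_{c^α}(β,γ,ζ), where c^α(g,h) := c(Ψ(α)(g), Ψ(α)(h)). (This is the coboundary formula d(c_{x,Ψ̄})(α,β,γ,ζ) = c_{x,Ψ̄}(β,γ,ζ) − c_{Ψ(α)_b(x),Ψ̄}(β,γ,ζ) for the composition cochain.) -/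
/-- The composition cochain `e_c(α,β,γ) = c(Ψ(α)(f(β,γ)), f(α,βγ)) − c(f(α,β), f(αβ,γ))`
associated to an abstract kernel `(Ψ, f)` and a 2-cochain `c` on `G`. -/
def eCochain {G P : Type*} [Group G] [Group P] (Ψ : P → G ≃* G) (f : P → P → G)
    (c : G → G → ℝ) (α β γ : P) : ℝ :=
  c (Ψ α (f β γ)) (f α (β * γ)) - c (f α β) (f (α * β) γ)

/-- If `n * t` is uniformly bounded then `t = 0`. -/
lemma hl_arch {t K : ℝ} (h : ∀ n : ℕ, |(n : ℝ) * t| ≤ K) : t = 0 := by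
  by_contra ht
  have h0 : 0 < |t| := abs_pos.mpr ht
  obtain ⟨n, hn⟩ := exists_nat_gt (K / |t|)
  have h1 := h n
  rw [abs_mul, Nat.abs_cast] at h1
  have h2 : K < (n : ℝ) * |t| := by
    have := (div_lt_iff₀ h0).mp hn
    linarith
  linarith

/-- Conjugated powers. -/
lemma hl_conj_pow {G : Type*} [Group G] (a x : G) (n : ℕ) :
    a * x ^ n * a⁻¹ = (a * x * a⁻¹) ^ n := by
  induction n with
  | zero => simp
  | succ m ih =>
    rw [pow_succ, pow_succ, ← ih]
    group

section CocycleLemmas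

variable {G : Type*} [Group G] (c : G → G → ℝ) (k : ℝ)

/-- A bounded homogeneous 2-cocycle is conjugation invariant; moreover
`c a x = c (a x a⁻¹) a`. -/
lemma hl_conj
    (hb : ∀ g h, |c g h| ≤ k)
    (hco : ∀ g h k' : G, c h k' - c (g*h) k' + c g (h*k') - c g h = 0)
    (hl1 : ∀ g : G, c 1 g = 0) (hr1 : ∀ g : G, c g 1 = 0)
    (hhom : ∀ (g : G) (n m : ℕ), c (g^n) (g^m) = 0) :
    (∀ a x y : G, c (a*x*a⁻¹) (a*y*a⁻¹) = c x y) ∧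
    (∀ a x : G, c a x = c (a*x*a⁻¹) a) := by
  have du : ∀ a x y : G, c x y - c (a*x*a⁻¹) (a*y*a⁻¹)
      = (c a x - c (a*x*a⁻¹) a) + (c a y - c (a*y*a⁻¹) a)
        - (c a (x*y) - c (a*(x*y)*a⁻¹) a) := by
    intro a x y
    have h1 := hco a x y
    have h2 := hco (a*x*a⁻¹) a y
    rw [show a*x*a⁻¹*a = a*x by group] at h2
    have h3 := hco (a*x*a⁻¹) (a*y*a⁻¹) a
    rw [show a*x*a⁻¹*(a*y*a⁻¹) = a*(x*y)*a⁻¹ by group,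
      show a*y*a⁻¹*a = a*y by group] at h3
    linarith
  have uzero : ∀ a x : G, c a x - c (a*x*a⁻¹) a = 0 := by
    intro a x
    have hstep : ∀ n : ℕ, c a (x^(n+1)) - c (a*x^(n+1)*a⁻¹) a
        = (c a (x^n) - c (a*x^n*a⁻¹) a) + (c a x - c (a*x*a⁻¹) a) := by
      intro n
      have hd := du a (x^n) x
      rw [← pow_succ] at hd
      have hz1 := hhom x n 1
      rw [pow_one] at hz1
      have hz2 : c (a*x^n*a⁻¹) (a*x*a⁻¹) = 0 := by
        rw [hl_conj_pow a x n]
        have := hhom (a*x*a⁻¹) n 1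
        rwa [pow_one] at this
      linarith
    have upow : ∀ n : ℕ, c a (x^n) - c (a*x^n*a⁻¹) a
        = (n : ℝ) * (c a x - c (a*x*a⁻¹) a) := by
      intro n
      induction n with
      | zero => simp [hl1, hr1]
      | succ m ih =>
        have := hstep m
        rw [ih] at this
        rw [this]
        push_cast
        ring
    have hbd : ∀ n : ℕ, |(n : ℝ) * (c a x - c (a*x*a⁻¹) a)| ≤ 2*k := by
      intro n
      rw [← upow n]
      have b1 := hb a (x^n)
      have b2 := hb (a*x^n*a⁻¹) a
      calc |c a (x^n) - c (a*x^n*a⁻¹) a| ≤ |c a (x^n)| + |c (a*x^n*a⁻¹) a| :=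
            abs_sub _ _
        _ ≤ 2*k := by linarith
    exact hl_arch hbd
  constructor
  · intro a x y
    have h := du a x y
    have u1 := uzero a x
    have u2 := uzero a y
    have u3 := uzero a (x*y)
    linarith
  · intro a x
    have := uzero a x
    linarith

/-- A bounded homogeneous 2-cocycle is symmetric. -/
lemma hl_symm
    (hb : ∀ g h, |c g h| ≤ k)
    (hco : ∀ g h k' : G, c h k' - c (g*h) k' + c g (h*k') - c g h = 0)
    (hl1 : ∀ g : G, c 1 g = 0) (hr1 : ∀ g : G, c g 1 = 0)
    (hhom : ∀ (g : G) (n m : ℕ), c (g^n) (g^m) = 0)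
    (hconj : ∀ a x y : G, c (a*x*a⁻¹) (a*y*a⁻¹) = c x y) :
    ∀ x y : G, c x y = c y x := by
  have move : ∀ u v : G, c u v - c v u = c (u*v) v - c v (u*v) := by
    intro u v
    have h1 := hco v u v
    have h2 := hconj v (u*v) v
    rw [show v*(u*v)*v⁻¹ = v*u by group, show v*v*v⁻¹ = v by group] at h2
    linarith
  have movePow : ∀ (m : ℕ) (u v : G),
      c (u*v^m) v - c v (u*v^m) = c u v - c v u := by
    intro m
    induction m with
    | zero => intro u v; simp
    | succ n ih =>
      intro u v
      have h1 := move (u*v^n) v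
      have h2 := ih u v
      rw [show u*v^n*v = u*v^(n+1) by rw [mul_assoc, ← pow_succ]] at h1
      linarith
  have shift : ∀ (n : ℕ) (x y : G),
      c (x^n*y) x - c x (x^n*y) = c y x - c x y := by
    intro n x y
    have h1 := hconj (x^n) y x
    rw [show x^n*x*(x^n)⁻¹ = x by rw [← pow_succ, pow_succ', mul_inv_cancel_right]] at h1
    have h1' := hconj (x^n) x y
    rw [show x^n*x*(x^n)⁻¹ = x by rw [← pow_succ, pow_succ', mul_inv_cancel_right]] at h1'
    have h2 := movePow n (x^n*y*(x^n)⁻¹) x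
    rw [show x^n*y*(x^n)⁻¹*x^n = x^n*y from inv_mul_cancel_right _ _] at h2
    linarith
  have hrec : ∀ (n : ℕ) (x y : G),
      c (x^(n+1)) y - c y (x^(n+1))
        = (c (x^n) y - c y (x^n)) + (c x y - c y x) := by
    intro n x y
    have h1 := hco x (x^n) y
    rw [show x*x^n = x^(n+1) from (pow_succ' x n).symm] at h1
    have h2 := hco y (x^n) x
    rw [show x^n*x = x^(n+1) from (pow_succ x n).symm] at h2
    have h3 := hconj (x^n) (y*x^n) x
    rw [show x^n*x*(x^n)⁻¹ = x by rw [← pow_succ, pow_succ', mul_inv_cancel_right],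
      show x^n*(y*x^n)*(x^n)⁻¹ = x^n*y by rw [← mul_assoc, mul_inv_cancel_right]] at h3
    have h4 := hhom x n 1
    rw [pow_one] at h4
    have h5 := hhom x 1 n
    rw [pow_one] at h5
    have h6 := shift n x y
    linarith
  intro x y
  have lin : ∀ n : ℕ, c (x^n) y - c y (x^n) = (n : ℝ) * (c x y - c y x) := by
    intro n
    induction n with
    | zero => simp [hl1, hr1]
    | succ m ih =>
      have := hrec m x y
      rw [ih] at this
      rw [this]
      push_cast
      ring
  have hbd : ∀ n : ℕ, |(n : ℝ) * (c x y - c y x)| ≤ 2*k := by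
    intro n
    rw [← lin n]
    have b1 := hb (x^n) y
    have b2 := hb y (x^n)
    calc |c (x^n) y - c y (x^n)| ≤ |c (x^n) y| + |c y (x^n)| := abs_sub _ _
      _ ≤ 2*k := by linarith
  have := hl_arch hbd
  linarith

/-- A bounded homogeneous 2-cocycle vanishes on commuting pairs. -/
lemma hl_comm
    (hb : ∀ g h, |c g h| ≤ k)
    (hco : ∀ g h k' : G, c h k' - c (g*h) k' + c g (h*k') - c g h = 0)
    (hl1 : ∀ g : G, c 1 g = 0)
    (hhom : ∀ (g : G) (n m : ℕ), c (g^n) (g^m) = 0)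
    (hsym : ∀ x y : G, c x y = c y x) :
    ∀ x y : G, x*y = y*x → c x y = 0 := by
  intro x y hxy
  have hCom : Commute x y := hxy
  have key : ∀ n m : ℕ, c (x^(n+m)) (y^(n+m)) = c (x^n) (y^n) + c (x^m) (y^m) := by
    intro n m
    have e1 := hco (x^n) (y^n) (x^m*y^m)
    rw [show y^n*(x^m*y^m) = x^m*y^(n+m) by
      rw [← mul_assoc, (hCom.symm.pow_pow n m).eq, mul_assoc, ← pow_add]] at e1
    have z1 : c (x^n*y^n) (x^m*y^m) = 0 := by
      have := hhom (x*y) n m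
      rwa [hCom.mul_pow, hCom.mul_pow] at this
    have e2 := hco (x^n) (x^m) (y^(n+m))
    rw [show x^n*x^m = x^(n+m) from (pow_add x n m).symm] at e2
    have z2 := hhom x n m
    have e3 := hco (x^m) (y^m) (y^n)
    rw [show y^m*y^n = y^(n+m) by rw [← pow_add, Nat.add_comm]] at e3
    have z3 := hhom y m n
    have s1 := hsym (y^n) (x^m*y^m)
    linarith
  have lin : ∀ n : ℕ, c (x^n) (y^n) = (n : ℝ) * c x y := by
    intro n
    induction n with
    | zero => simp [hl1]
    | succ m ih =>
      have h := key m 1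
      rw [ih, pow_one, pow_one] at h
      rw [h]
      push_cast
      ring
  have hbd : ∀ n : ℕ, |(n : ℝ) * c x y| ≤ k := by
    intro n
    rw [← lin n]
    exact hb _ _
  exact hl_arch hbd

/-- The main algebraic identity, for six arbitrary elements. -/
lemma hl_main_alg
    (hco : ∀ g h k' : G, c h k' - c (g*h) k' + c g (h*k') - c g h = 0)
    (hl1 : ∀ g : G, c 1 g = 0) (hr1 : ∀ g : G, c g 1 = 0)
    (hL0 : ∀ a x : G, c a x = c (a*x*a⁻¹) a)
    (hinv : ∀ a : G, c a⁻¹ a = 0)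
    (A B D E K q : G) :
    c (A*B*D⁻¹) D - c A B - c (B*K*E⁻¹) E + c B K
      + c (D*K*E⁻¹*A⁻¹*q) (q⁻¹*A*E) - c D K - c q (q⁻¹*A*E) + c A E
      + c (A*B*K*E⁻¹*A⁻¹) q - c (A*B*D⁻¹) (D*K*E⁻¹*A⁻¹*q) = 0 := by
  have i1 := hco (A*B*D⁻¹) D (K*E⁻¹*A⁻¹*q)
  rw [show A*B*D⁻¹*D = A*B by group,
    show D*(K*E⁻¹*A⁻¹*q) = D*K*E⁻¹*A⁻¹*q by group] at i1
  have i2 := hco D (K*E⁻¹*A⁻¹*q) (q⁻¹*A*E)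
  rw [show D*(K*E⁻¹*A⁻¹*q) = D*K*E⁻¹*A⁻¹*q by group,
    show K*E⁻¹*A⁻¹*q*(q⁻¹*A*E) = K by group] at i2
  have i3 := hco (A*B) (K*E⁻¹*A⁻¹) q
  rw [show A*B*(K*E⁻¹*A⁻¹) = A*B*K*E⁻¹*A⁻¹ by group] at i3
  have i4 := hco (K*E⁻¹*A⁻¹) q (q⁻¹*A*E)
  rw [show q*(q⁻¹*A*E) = A*E by group] at i4
  have i5 := hco A B (K*E⁻¹*A⁻¹)
  rw [show B*(K*E⁻¹*A⁻¹) = B*K*E⁻¹*A⁻¹ by group] at i5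
  have i6 := hco (K*E⁻¹) A⁻¹ (A*E)
  rw [show A⁻¹*(A*E) = E by group] at i6
  have i7 := hco B (K*E⁻¹) E
  rw [show B*(K*E⁻¹) = B*K*E⁻¹ by group, show K*E⁻¹*E = K by group] at i7
  have i8 := hco B (K*E⁻¹) A⁻¹
  rw [show B*(K*E⁻¹) = B*K*E⁻¹ by group] at i8
  have i9 := hco A (B*K*E⁻¹) A⁻¹
  rw [show A*(B*K*E⁻¹) = A*B*K*E⁻¹ by group] at i9
  have i10 := hco A⁻¹ A E
  rw [show A⁻¹*A = (1:G) by group] at i10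
  have i11 := hco (A*B*K*E⁻¹) A⁻¹ A
  rw [show A⁻¹*A = (1:G) by group] at i11
  have i12 := hL0 A (B*K*E⁻¹)
  rw [show A*(B*K*E⁻¹)*A⁻¹ = A*B*K*E⁻¹*A⁻¹ by group] at i12
  linarith [i1, i2, i3, i4, i5, i6, i7, i8, i9, i10, i11, i12,
    hl1 E, hr1 (A*B*K*E⁻¹), hinv A]

end CocycleLemmas

/-- For an abstract kernel, `Ψ α (f β γ) * f α (βγ)` and `f α β * f (αβ) γ` differ
by a central element. -/
lemma hl_kernel_rel {G P : Type*} [Group G] [Group P] (Ψ : P → G ≃* G) (f : P → P → G)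
    (hkernel : ∀ (α β : P) (g : G),
      Ψ α (Ψ β g) = f α β * Ψ (α * β) g * (f α β)⁻¹)
    (α β γ : P) :
    ∃ z : G, (∀ g, z*g = g*z) ∧
      Ψ α (f β γ) * f α (β*γ) = f α β * f (α*β) γ * z := by
  have hconj : ∀ X : G,
      (Ψ α (f β γ) * f α (β*γ)) * X * (Ψ α (f β γ) * f α (β*γ))⁻¹
        = (f α β * f (α*β) γ) * X * (f α β * f (α*β) γ)⁻¹ := by
    intro X
    obtain ⟨g, rfl⟩ := (Ψ (α*β*γ)).surjective X
    have h1 : Ψ α (Ψ β (Ψ γ g))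
        = (Ψ α (f β γ) * f α (β*γ)) * Ψ (α*β*γ) g * (Ψ α (f β γ) * f α (β*γ))⁻¹ := by
      rw [hkernel β γ g, map_mul, map_mul, map_inv, hkernel α (β*γ) g,
        show α*(β*γ) = α*β*γ from (mul_assoc α β γ).symm]
      group
    have h2 : Ψ α (Ψ β (Ψ γ g))
        = (f α β * f (α*β) γ) * Ψ (α*β*γ) g * (f α β * f (α*β) γ)⁻¹ := by
      rw [hkernel α β (Ψ γ g), hkernel (α*β) γ g]
      group
    rw [← h1, ← h2]
  refine ⟨(f α β * f (α*β) γ)⁻¹ * (Ψ α (f β γ) * f α (β*γ)), fun g => ?_, by group⟩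
  have h3 := hconj g
  calc (f α β * f (α*β) γ)⁻¹ * (Ψ α (f β γ) * f α (β*γ)) * g
      = (f α β * f (α*β) γ)⁻¹
          * ((Ψ α (f β γ) * f α (β*γ)) * g * (Ψ α (f β γ) * f α (β*γ))⁻¹)
          * (Ψ α (f β γ) * f α (β*γ)) := by group
    _ = (f α β * f (α*β) γ)⁻¹
          * ((f α β * f (α*β) γ) * g * (f α β * f (α*β) γ)⁻¹)
          * (Ψ α (f β γ) * f α (β*γ)) := by rw [h3]
    _ = g * ((f α β * f (α*β) γ)⁻¹ * (Ψ α (f β γ) * f α (β*γ))) := by group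

/-- the coboundary formula for the composition cochain
`d(c_{x,Ψ̄})(α,β,γ,ζ) = c_{x,Ψ̄}(β,γ,ζ) − c_{Ψ(α)_b(x),Ψ̄}(β,γ,ζ)`. -/
theorem stmt_16 {G P : Type*} [Group G] [Group P]
    (Ψ : P → G ≃* G) (f : P → P → G)
    (hkernel : ∀ (α β : P) (g : G),
      Ψ α (Ψ β g) = f α β * Ψ (α * β) g * (f α β)⁻¹)
    (c : G → G → ℝ) (hc : IsBounded2Cocycle c) (hhom : IsHomogeneous2Cocycle c) :
    ∀ α β γ ζ : P,
      eCochain Ψ f c β γ ζ - eCochain Ψ f c (α * β) γ ζ + eCochain Ψ f c α (β * γ) ζ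
        - eCochain Ψ f c α β (γ * ζ) + eCochain Ψ f c α β γ =
      eCochain Ψ f c β γ ζ -
        eCochain Ψ f (fun g h => c (Ψ α g) (Ψ α h)) β γ ζ := by
  obtain ⟨⟨k, hk⟩, hco, hr1, hl1⟩ := hc
  have hhom' : ∀ (g : G) (n m : ℕ), c (g ^ n) (g ^ m) = 0 := hhom
  obtain ⟨hconj, hL0⟩ := hl_conj c k hk hco hl1 hr1 hhom'
  have hsym := hl_symm c k hk hco hl1 hr1 hhom' hconj
  have hcomm := hl_comm c k hk hco hl1 hhom' hsym
  have hinv : ∀ a : G, c a⁻¹ a = 0 := fun a => hcomm a⁻¹ a (by group)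
  -- strip lemmas for central elements
  have czero : ∀ z : G, (∀ g, z*g = g*z) → ∀ x, c z x = 0 :=
    fun z hz x => hcomm z x (hz x)
  have czero' : ∀ z : G, (∀ g, z*g = g*z) → ∀ x, c x z = 0 :=
    fun z hz x => hcomm x z (hz x).symm
  have sL : ∀ z : G, (∀ g, z*g = g*z) → ∀ x y, c (x*z) y = c x y := by
    intro z hz x y
    rw [show x*z = z*x from (hz x).symm]
    have h := hco z x y
    have h1 := czero z hz (x*y)
    have h2 := czero z hz x
    linarith
  have sR : ∀ z : G, (∀ g, z*g = g*z) → ∀ x y, c x (y*z) = c x y := by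
    intro z hz x y
    rw [show y*z = z*y from (hz y).symm]
    have h := hco x z y
    have h1 := czero z hz y
    have h2 := czero' z hz x
    have h3 := sL z hz x y
    linarith
  have cinv : ∀ z : G, (∀ g, z*g = g*z) → ∀ g, z⁻¹*g = g*z⁻¹ := by
    intro z hz g
    calc z⁻¹*g = z⁻¹*(g*z)*z⁻¹ := by group
      _ = z⁻¹*(z*g)*z⁻¹ := by rw [← hz g]
      _ = g*z⁻¹ := by group
  have cmul : ∀ z w : G, (∀ g, z*g = g*z) → (∀ g, w*g = g*w) →
      ∀ g, (z*w)*g = g*(z*w) := by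
    intro z w hz hw g
    calc (z*w)*g = z*(w*g) := by rw [mul_assoc]
      _ = z*(g*w) := by rw [hw g]
      _ = (z*g)*w := by rw [mul_assoc]
      _ = (g*z)*w := by rw [hz g]
      _ = g*(z*w) := by rw [mul_assoc]
  intro α β γ ζ
  simp only [eCochain]
  rw [hkernel α β (f γ ζ)]
  simp only [← mul_assoc]
  set A := f α β with hA
  set B := f (α*β) γ with hB
  set D := f α (β*γ) with hD
  set E := f (α*β) (γ*ζ) with hE
  set F := f α (β*γ*ζ) with hF0
  set K := f (α*β*γ) ζ with hK
  set p := Ψ α (f β γ) with hp0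
  set q := Ψ α (f β (γ*ζ)) with hq0
  set r := Ψ α (f (β*γ) ζ) with hr0
  set s := Ψ (α*β) (f γ ζ) with hs0
  -- central relations from the abstract kernel
  obtain ⟨z₁, hz₁c, hz₁⟩ := hl_kernel_rel Ψ f hkernel α β γ
  rw [← hA, ← hB, ← hD, ← hp0] at hz₁
  obtain ⟨z₂, hz₂c, hz₂⟩ := hl_kernel_rel Ψ f hkernel α β (γ*ζ)
  rw [show β*(γ*ζ) = β*γ*ζ from (mul_assoc β γ ζ).symm] at hz₂
  rw [← hA, ← hE, ← hF0, ← hq0] at hz₂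
  obtain ⟨z₃, hz₃c, hz₃⟩ := hl_kernel_rel Ψ f hkernel α (β*γ) ζ
  rw [show α*(β*γ) = α*β*γ from (mul_assoc α β γ).symm] at hz₃
  rw [← hD, ← hK, ← hF0, ← hr0] at hz₃
  obtain ⟨z₄, hz₄c, hz₄⟩ := hl_kernel_rel Ψ f hkernel (α*β) γ ζ
  rw [← hB, ← hE, ← hK, ← hs0] at hz₄
  have hz₆c := cmul z₃ z₂⁻¹ hz₃c (cinv z₂ hz₂c)
  -- decompositions
  have hp1 : p = A*B*D⁻¹*z₁ := by
    have h : p = A*B*z₁*D⁻¹ := eq_mul_inv_iff_mul_eq.mpr hz₁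
    rw [h]
    calc A*B*z₁*D⁻¹ = A*B*(z₁*D⁻¹) := by group
      _ = A*B*(D⁻¹*z₁) := by rw [hz₁c]
      _ = A*B*D⁻¹*z₁ := by group
  have hF1 : F = q⁻¹*A*E*z₂ := by
    have h : F = q⁻¹*(A*E*z₂) := eq_inv_mul_iff_mul_eq.mpr hz₂
    rw [h]; group
  have hr1' : r = D*K*E⁻¹*A⁻¹*q*(z₃*z₂⁻¹) := by
    have h : r = D*K*z₃*F⁻¹ := eq_mul_inv_iff_mul_eq.mpr hz₃
    rw [h, hF1]
    calc D*K*z₃*(q⁻¹*A*E*z₂)⁻¹ = D*K*((z₃*z₂⁻¹)*(q⁻¹*A*E)⁻¹) := by group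
      _ = D*K*((q⁻¹*A*E)⁻¹*(z₃*z₂⁻¹)) := by rw [hz₆c]
      _ = D*K*E⁻¹*A⁻¹*q*(z₃*z₂⁻¹) := by group
  have hs1 : s = B*K*E⁻¹*z₄ := by
    have h : s = B*K*z₄*E⁻¹ := eq_mul_inv_iff_mul_eq.mpr hz₄
    rw [h]
    calc B*K*z₄*E⁻¹ = B*K*(z₄*E⁻¹) := by group
      _ = B*K*(E⁻¹*z₄) := by rw [hz₄c]
      _ = B*K*E⁻¹*z₄ := by group
  -- rewriting the ten cochain values in stripped form
  have eq1 : c p D = c (A*B*D⁻¹) D := by rw [hp1, sL z₁ hz₁c]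
  have eq2 : c q F = c q (q⁻¹*A*E) := by rw [hF1, sR z₂ hz₂c]
  have eq3 : c r F = c (D*K*E⁻¹*A⁻¹*q) (q⁻¹*A*E) := by
    rw [hr1', hF1, sL _ hz₆c, sR z₂ hz₂c]
  have eq4 : c s E = c (B*K*E⁻¹) E := by rw [hs1, sL z₄ hz₄c]
  have eq5 : c (A*s*A⁻¹) q = c (A*B*K*E⁻¹*A⁻¹) q := by
    have hY : A*s*A⁻¹ = A*B*K*E⁻¹*A⁻¹*z₄ := by
      rw [hs1]
      calc A*(B*K*E⁻¹*z₄)*A⁻¹ = A*B*K*E⁻¹*(z₄*A⁻¹) := by group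
        _ = A*B*K*E⁻¹*(A⁻¹*z₄) := by rw [hz₄c]
        _ = A*B*K*E⁻¹*A⁻¹*z₄ := by group
    rw [hY, sL z₄ hz₄c]
  have eq6 : c p r = c (A*B*D⁻¹) (D*K*E⁻¹*A⁻¹*q) := by
    rw [hp1, hr1', sL z₁ hz₁c, sR _ hz₆c]
  have malg := hl_main_alg c hco hl1 hr1 hL0 hinv A B D E K q
  linarith [eq1, eq2, eq3, eq4, eq5, eq6, malg]
end

section
/- Let G and Π be groups, (Ψ, f) an abstract kernel for Π and G, and c a homogeneous bounded 2-cocycle on G such that c(Ψ(α)(g), Ψ(α)(h)) = c(g,h) for all α ∈ Π and g, h ∈ G (i.e. the bounded cohomology class of c is Π-invariant). Then e_c : Π³ → ℝ is a bounded 3-cocycle on Π with trivial real coefficients: e_c(β,γ,ζ) − e_c(αβ,γ,ζ) + e_c(α,βγ,ζ) − e_c(α,β,γζ) + e_c(α,β,γ) = 0 for all α,β,γ,ζ ∈ Π, and |e_c| ≤ 2·sup|c|. (Its class is the transgression δ([c]) ∈ H_b³(Π,ℝ), which coincides with the differential d₃ of the Hochschild–Serre spectral sequence.) -/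
/- ----------------------------------------------------------------
   Auxiliary material for the proof of `stmt_17`.
----------------------------------------------------------------- -/

/-- A real number `x` with `n * |x| ≤ K` for all naturals `n` is zero. -/
lemma aux_eq_zero_of_nat_mul_abs_le (x K : ℝ) (h : ∀ n : ℕ, (n : ℝ) * |x| ≤ K) : x = 0 := by
  by_contra hx
  have hpos : 0 < |x| := abs_pos.mpr hx
  obtain ⟨n, hn⟩ := exists_nat_gt (K / |x|)
  have h1 := h n
  have h2 : (n : ℝ) ≤ K / |x| := (le_div_iff₀ hpos).mpr h1
  linarith

section AuxCocycle

variable {G : Type*} [Group G] (c : G → G → ℝ)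

/-- If `c` is a normalized bounded 2-cocycle invariant under conjugation by `a`,
then the "transfer" function `g ↦ c(a,g) + c(ag,a⁻¹) − c(a,a⁻¹)` vanishes. -/
lemma aux_tau_zero
    (hco : ∀ g h k : G, c h k - c (g * h) k + c g (h * k) - c g h = 0)
    (h1 : ∀ g : G, c g 1 = 0)
    (k : ℝ) (hk : ∀ g h : G, |c g h| ≤ k)
    (a : G) (hconj : ∀ g h : G, c (a * g * a⁻¹) (a * h * a⁻¹) = c g h) :
    ∀ g : G, c a g + c (a * g) a⁻¹ - c a a⁻¹ = 0 := by
  have hadd : ∀ g h : G,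
      c a (g * h) + c (a * (g * h)) a⁻¹ - c a a⁻¹
        = (c a g + c (a * g) a⁻¹ - c a a⁻¹) + (c a h + c (a * h) a⁻¹ - c a a⁻¹) := by
    intro g h
    have J1 := hco (a * g) h a⁻¹
    rw [show a * g * h = a * (g * h) from mul_assoc a g h] at J1
    have J2 := hco a g h
    have J3 := hco (a * g * a⁻¹) a (h * a⁻¹)
    rw [show a * g * a⁻¹ * a = a * g by group,
        show a * (h * a⁻¹) = a * h * a⁻¹ by group] at J3
    have J4 := hco a h a⁻¹
    have J5 := hco (a * g * a⁻¹) a a⁻¹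
    rw [show a * g * a⁻¹ * a = a * g by group, mul_inv_cancel a, h1] at J5
    have HC := hconj g h
    linarith
  intro g
  have hpow : ∀ n : ℕ, c a (g ^ n) + c (a * g ^ n) a⁻¹ - c a a⁻¹
      = (n : ℝ) * (c a g + c (a * g) a⁻¹ - c a a⁻¹) := by
    intro n
    induction n with
    | zero => simp [h1]
    | succ n ih =>
        rw [pow_succ, hadd (g ^ n) g, ih]
        push_cast; ring
  have habs : ∀ y : G, |c a y + c (a * y) a⁻¹ - c a a⁻¹| ≤ 3 * k := by
    intro y
    have b1 := hk a y; have b2 := hk (a * y) a⁻¹; have b3 := hk a a⁻¹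
    rw [abs_le] at b1 b2 b3 ⊢
    constructor <;> [linarith [b1.1, b2.1, b3.2]; linarith [b1.2, b2.2, b3.1]]
  have hz : c a g + c (a * g) a⁻¹ - c a a⁻¹ = 0 := by
    apply aux_eq_zero_of_nat_mul_abs_le _ (3 * k)
    intro n
    have := habs (g ^ n)
    rw [hpow n, abs_mul, Nat.abs_cast] at this
    exact this
  exact hz

/-- If `c` is a normalized bounded 2-cocycle invariant under conjugation by `a`,
then `c(a, ·) = c(·, a)`. -/
lemma aux_sym_of_conj
    (hco : ∀ g h k : G, c h k - c (g * h) k + c g (h * k) - c g h = 0)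
    (h1 : ∀ g : G, c g 1 = 0) (h2 : ∀ g : G, c 1 g = 0)
    (k : ℝ) (hk : ∀ g h : G, |c g h| ≤ k)
    (a : G) (hconj : ∀ g h : G, c (a * g * a⁻¹) (a * h * a⁻¹) = c g h) :
    ∀ g : G, c a g = c g a := by
  have hconj' : ∀ g h : G, c (a⁻¹ * g * a⁻¹⁻¹) (a⁻¹ * h * a⁻¹⁻¹) = c g h := by
    intro g h
    have hh := hconj (a⁻¹ * g * a) (a⁻¹ * h * a)
    rw [show a * (a⁻¹ * g * a) * a⁻¹ = g by group,
        show a * (a⁻¹ * h * a) * a⁻¹ = h by group] at hh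
    rw [inv_inv]
    exact hh.symm
  have ht := aux_tau_zero c hco h1 k hk a⁻¹ hconj'
  intro g
  have hA := ht (a * g)
  rw [inv_inv, show a⁻¹ * (a * g) = g by group] at hA
  have hB := hco a⁻¹ a g
  rw [inv_mul_cancel a, h2] at hB
  linarith

/-- Carrier for the central extension `ℝ ×_c G`. -/
structure AuxExt (G : Type*) where
  t : ℝ
  g : G

/-- If `z` commutes with everything (or even just with `x`, together with symmetry),
a bounded homogeneous 2-cocycle vanishes at `(z, x)` and `(x, z)`. -/
lemma aux_central_zero
    (hco : ∀ g h k : G, c h k - c (g * h) k + c g (h * k) - c g h = 0)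
    (h1 : ∀ g : G, c g 1 = 0) (h2 : ∀ g : G, c 1 g = 0)
    (hhom : ∀ (g : G) (n m : ℕ), c (g ^ n) (g ^ m) = 0)
    (k : ℝ) (hk : ∀ g h : G, |c g h| ≤ k)
    (z : G) (hz : ∀ y : G, z * y = y * z) :
    ∀ x : G, c z x = 0 ∧ c x z = 0 := by
  have hconj_z : ∀ g h : G, c (z * g * z⁻¹) (z * h * z⁻¹) = c g h := by
    intro g h
    rw [show z * g * z⁻¹ = g by rw [hz g]; group,
        show z * h * z⁻¹ = h by rw [hz h]; group]
  have hsymz : ∀ g : G, c z g = c g z :=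
    aux_sym_of_conj c hco h1 h2 k hk z hconj_z
  have hmain : ∀ x : G, c z x = 0 := by
    intro x
    -- build the central extension ℝ ×_c G
    letI : One (AuxExt G) := ⟨⟨0, 1⟩⟩
    letI : Mul (AuxExt G) := ⟨fun u v => ⟨u.t + v.t + c u.g v.g, u.g * v.g⟩⟩
    letI : Inv (AuxExt G) := ⟨fun u => ⟨-u.t - c u.g u.g⁻¹, u.g⁻¹⟩⟩
    have hmul : ∀ u v : AuxExt G, u * v = ⟨u.t + v.t + c u.g v.g, u.g * v.g⟩ :=
      fun _ _ => rfl
    have hone : (1 : AuxExt G) = ⟨0, 1⟩ := rfl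
    have hinv1 : ∀ u : AuxExt G, u⁻¹ = ⟨-u.t - c u.g u.g⁻¹, u.g⁻¹⟩ := fun _ => rfl
    have hsyminv : ∀ g : G, c g⁻¹ g = c g g⁻¹ := by
      intro g
      have := hco g g⁻¹ g
      rw [mul_inv_cancel g, inv_mul_cancel g, h1, h2] at this
      linarith
    letI : Group (AuxExt G) := Group.ofLeftAxioms
      (by
        intro u v w
        rw [hmul, hmul, hmul, hmul]
        have := hco u.g v.g w.g
        simp only [AuxExt.mk.injEq]
        exact ⟨by linarith, mul_assoc _ _ _⟩)
      (by
        intro u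
        obtain ⟨ut, ug⟩ := u
        rw [hone, hmul]
        simp only [AuxExt.mk.injEq]
        exact ⟨by simp [h2], one_mul _⟩)
      (by
        intro u
        rw [hinv1, hmul, hone]
        simp only [AuxExt.mk.injEq]
        refine ⟨?_, inv_mul_cancel _⟩
        rw [hsyminv u.g]
        ring)
    -- powers of basic elements
    have hpow0 : ∀ (g : G) (n : ℕ), (⟨0, g⟩ : AuxExt G) ^ n = ⟨0, g ^ n⟩ := by
      intro g n
      induction n with
      | zero => rw [pow_zero, pow_zero, hone]
      | succ n ih =>
          rw [pow_succ, ih, hmul]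
          have hh := hhom g n 1
          rw [pow_one] at hh
          simp only [AuxExt.mk.injEq]
          exact ⟨by simp [hh], (pow_succ g n).symm⟩
    have hpows : ∀ (s : ℝ) (n : ℕ), (⟨s, 1⟩ : AuxExt G) ^ n = ⟨n * s, 1⟩ := by
      intro s n
      induction n with
      | zero => rw [pow_zero, hone]; norm_num
      | succ n ih =>
          rw [pow_succ, ih, hmul]
          simp only [AuxExt.mk.injEq]
          constructor
          · have : c (1 : G) 1 = 0 := h1 1
            simp only [this]
            push_cast; ring
          · exact one_mul 1
    have hcomm1 : Commute (⟨0, z⟩ : AuxExt G) ⟨0, x⟩ := by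
      show _ * _ = _ * _
      rw [hmul, hmul]
      simp only [AuxExt.mk.injEq]
      exact ⟨by rw [hsymz x], hz x⟩
    have hsplit : (⟨0, z⟩ : AuxExt G) * ⟨0, x⟩ = (⟨c z x, 1⟩ : AuxExt G) * ⟨0, z * x⟩ := by
      rw [hmul, hmul]
      simp only [AuxExt.mk.injEq]
      exact ⟨by simp [h2], (one_mul _).symm⟩
    have hcomm2 : Commute (⟨c z x, 1⟩ : AuxExt G) ⟨0, z * x⟩ := by
      show _ * _ = _ * _
      rw [hmul, hmul]
      simp only [AuxExt.mk.injEq]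
      exact ⟨by rw [h1, h2]; ring, by rw [one_mul, mul_one]⟩
    have key : ∀ n : ℕ, c (z ^ n) (x ^ n) = (n : ℝ) * c z x := by
      intro n
      have hA : ((⟨0, z⟩ : AuxExt G) * ⟨0, x⟩) ^ n = ⟨c (z ^ n) (x ^ n), z ^ n * x ^ n⟩ := by
        rw [hcomm1.mul_pow, hpow0, hpow0, hmul]
        simp
      have hB : ((⟨0, z⟩ : AuxExt G) * ⟨0, x⟩) ^ n = ⟨(n : ℝ) * c z x, (z * x) ^ n⟩ := by
        rw [hsplit, hcomm2.mul_pow, hpows, hpow0, hmul]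
        simp only [AuxExt.mk.injEq]
        exact ⟨by simp [h2], one_mul _⟩
      have := hA.symm.trans hB
      exact congrArg AuxExt.t this
    apply aux_eq_zero_of_nat_mul_abs_le _ k
    intro n
    have hb := hk (z ^ n) (x ^ n)
    rw [key n, abs_mul, Nat.abs_cast] at hb
    exact hb
  intro x
  exact ⟨hmain x, (hsymz x).symm ▸ hmain x⟩

/-- Central elements are transparent for `c`. -/
lemma aux_cdrop
    (hco : ∀ g h k : G, c h k - c (g * h) k + c g (h * k) - c g h = 0)
    (h1 : ∀ g : G, c g 1 = 0) (h2 : ∀ g : G, c 1 g = 0)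
    (hhom : ∀ (g : G) (n m : ℕ), c (g ^ n) (g ^ m) = 0)
    (k : ℝ) (hk : ∀ g h : G, |c g h| ≤ k)
    (z : G) (hz : ∀ y : G, z * y = y * z) :
    (∀ g h : G, c (g * z) h = c g h) ∧ (∀ g h : G, c g (h * z) = c g h) := by
  have h0 := aux_central_zero c hco h1 h2 hhom k hk z hz
  have hleft : ∀ g h : G, c (g * z) h = c g h := by
    intro g h
    rw [← hz g]
    have := hco z g h
    have e1 := (h0 g).1
    have e2 := (h0 (g * h)).1
    linarith
  refine ⟨hleft, ?_⟩
  intro g h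
  rw [← hz h]
  have := hco g z h
  have e1 := (h0 h).1
  have e2 := (h0 g).2
  have e3 := hleft g h
  linarith

/-- The purely formal core identity. -/
lemma aux_core
    (hco : ∀ g h k : G, c h k - c (g * h) k + c g (h * k) - c g h = 0)
    (h1 : ∀ g : G, c g 1 = 0)
    (a b d t m w : G) (hsym : ∀ g : G, c a g = c g a) :
    c (b * (d * m⁻¹)) (m * (w⁻¹ * a)) - c (a * (b * t⁻¹)) (t * (d * w⁻¹))
      - c (b * (d * m⁻¹)) m + c b d + c (t * (d * w⁻¹)) w - c t d
      - c (a * (m * w⁻¹)) w + c a m + c (a * (b * t⁻¹)) t - c a b = 0 := by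
  have I1 := hco (a * (b * t⁻¹)) t d
  rw [show a * (b * t⁻¹) * t = a * b by group] at I1
  have I2 := hco (a * (b * t⁻¹)) (t * d) w⁻¹
  rw [show a * (b * t⁻¹) * (t * d) = a * (b * d) by group, mul_assoc t d w⁻¹] at I2
  have I3 := hco (t * d) w⁻¹ w
  rw [mul_assoc t d w⁻¹, inv_mul_cancel w, h1] at I3
  have I4 := hco (a * m) w⁻¹ w
  rw [mul_assoc a m w⁻¹, inv_mul_cancel w, h1] at I4
  have I5 := hco a b d
  have I6 := hco a m w⁻¹
  have I7 := hco a (b * d) w⁻¹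
  rw [mul_assoc b d w⁻¹] at I7
  have I8 := hco (b * (d * m⁻¹)) m w⁻¹
  rw [show b * (d * m⁻¹) * m = b * d by group] at I8
  have I9 := hco (b * (d * m⁻¹)) (m * w⁻¹) a
  rw [show b * (d * m⁻¹) * (m * w⁻¹) = b * (d * w⁻¹) by group, mul_assoc m w⁻¹ a] at I9
  have S1 := hsym (m * w⁻¹)
  have S2 := hsym (b * (d * w⁻¹))
  linarith

end AuxCocycle

section AuxKernel

variable {G P : Type*} [Group G] [Group P] (Ψ : P → G ≃* G) (f : P → P → G)

/-- The central "obstruction" element attached to a triple. -/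
def auxZel (x y z : P) : G :=
  (f x y * f (x * y) z)⁻¹ * (Ψ x (f y z) * f x (y * z))

lemma auxZel_rel (x y z : P) :
    Ψ x (f y z) * f x (y * z) = (f x y * f (x * y) z) * auxZel Ψ f x y z := by
  unfold auxZel
  group

lemma auxZel_central
    (hkernel : ∀ (α β : P) (g : G), Ψ α (Ψ β g) = f α β * Ψ (α * β) g * (f α β)⁻¹)
    (x y z : P) : ∀ g : G, auxZel Ψ f x y z * g = g * auxZel Ψ f x y z := by
  intro g
  have hg : g = Ψ (x * (y * z)) ((Ψ (x * (y * z))).symm g) :=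
    (MulEquiv.apply_symm_apply _ _).symm
  set G0 := (Ψ (x * (y * z))).symm g with hG0
  have hu : Ψ x (f y z) * f x (y * z) * g * (Ψ x (f y z) * f x (y * z))⁻¹
      = Ψ x (Ψ y (Ψ z G0)) := by
    conv_lhs => rw [hg]
    calc Ψ x (f y z) * f x (y * z) * Ψ (x * (y * z)) G0 * (Ψ x (f y z) * f x (y * z))⁻¹
        = Ψ x (f y z) * (f x (y * z) * Ψ (x * (y * z)) G0 * (f x (y * z))⁻¹)
            * (Ψ x (f y z))⁻¹ := by group
      _ = Ψ x (f y z) * Ψ x (Ψ (y * z) G0) * (Ψ x (f y z))⁻¹ := by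
            rw [← hkernel x (y * z) G0]
      _ = Ψ x (f y z * Ψ (y * z) G0 * (f y z)⁻¹) := by
            rw [map_mul, map_mul, map_inv]
      _ = Ψ x (Ψ y (Ψ z G0)) := by rw [← hkernel y z G0]
  have hv : f x y * f (x * y) z * g * (f x y * f (x * y) z)⁻¹
      = Ψ x (Ψ y (Ψ z G0)) := by
    conv_lhs => rw [hg]
    rw [show x * (y * z) = x * y * z from (mul_assoc x y z).symm]
    calc f x y * f (x * y) z * Ψ (x * y * z) G0 * (f x y * f (x * y) z)⁻¹
        = f x y * (f (x * y) z * Ψ (x * y * z) G0 * (f (x * y) z)⁻¹) * (f x y)⁻¹ := by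
            group
      _ = f x y * Ψ (x * y) (Ψ z G0) * (f x y)⁻¹ := by rw [← hkernel (x * y) z G0]
      _ = Ψ x (Ψ y (Ψ z G0)) := by rw [← hkernel x y (Ψ z G0)]
  have hs := hu.trans hv.symm
  set u := Ψ x (f y z) * f x (y * z) with hu0
  set v := f x y * f (x * y) z with hv0
  have : auxZel Ψ f x y z = v⁻¹ * u := rfl
  rw [this]
  calc v⁻¹ * u * g = v⁻¹ * (u * g * u⁻¹) * u := by group
    _ = v⁻¹ * (v * g * v⁻¹) * u := by rw [hs]
    _ = g * (v⁻¹ * u) := by group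

lemma auxPsi_eq
    (hkernel : ∀ (α β : P) (g : G), Ψ α (Ψ β g) = f α β * Ψ (α * β) g * (f α β)⁻¹)
    (x y z : P) :
    Ψ x (f y z)
      = (f x y * (f (x * y) z * (f x (y * z))⁻¹)) * auxZel Ψ f x y z := by
  have h := auxZel_rel Ψ f x y z
  have hc := auxZel_central Ψ f hkernel x y z (f x (y * z))⁻¹
  calc Ψ x (f y z) = (Ψ x (f y z) * f x (y * z)) * (f x (y * z))⁻¹ := by group
    _ = ((f x y * f (x * y) z) * auxZel Ψ f x y z) * (f x (y * z))⁻¹ := by rw [h]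
    _ = (f x y * f (x * y) z) * (auxZel Ψ f x y z * (f x (y * z))⁻¹) := by
          rw [mul_assoc]
    _ = (f x y * f (x * y) z) * ((f x (y * z))⁻¹ * auxZel Ψ f x y z) := by rw [hc]
    _ = (f x y * (f (x * y) z * (f x (y * z))⁻¹)) * auxZel Ψ f x y z := by group

lemma auxConjInv (c : G → G → ℝ)
    (hkernel : ∀ (α β : P) (g : G), Ψ α (Ψ β g) = f α β * Ψ (α * β) g * (f α β)⁻¹)
    (hinv : ∀ (α : P) (g h : G), c (Ψ α g) (Ψ α h) = c g h)
    (α β : P) : ∀ x y : G,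
      c (f α β * x * (f α β)⁻¹) (f α β * y * (f α β)⁻¹) = c x y := by
  intro x y
  have hx := hkernel α β ((Ψ (α * β)).symm x)
  rw [MulEquiv.apply_symm_apply] at hx
  have hy := hkernel α β ((Ψ (α * β)).symm y)
  rw [MulEquiv.apply_symm_apply] at hy
  calc c (f α β * x * (f α β)⁻¹) (f α β * y * (f α β)⁻¹)
      = c (Ψ α (Ψ β ((Ψ (α * β)).symm x))) (Ψ α (Ψ β ((Ψ (α * β)).symm y))) := by
        rw [hx, hy]
    _ = c (Ψ β ((Ψ (α * β)).symm x)) (Ψ β ((Ψ (α * β)).symm y)) := hinv α _ _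
    _ = c ((Ψ (α * β)).symm x) ((Ψ (α * β)).symm y) := hinv β _ _
    _ = c (Ψ (α * β) ((Ψ (α * β)).symm x)) (Ψ (α * β) ((Ψ (α * β)).symm y)) :=
        (hinv (α * β) _ _).symm
    _ = c x y := by rw [MulEquiv.apply_symm_apply, MulEquiv.apply_symm_apply]

end AuxKernel

/-- if the homogeneous bounded 2-cocycle `c` is `Π`-invariant, then the
composition cochain `e_c` is a bounded 3-cocycle on `Π` with trivial real coefficients,
with `|e_c| ≤ 2·sup|c|`; its class is the transgression `δ([c]) = d₃([c])`. -/
theorem stmt_17 {G P : Type*} [Group G] [Group P]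
    (Ψ : P → G ≃* G) (f : P → P → G)
    (hkernel : ∀ (α β : P) (g : G),
      Ψ α (Ψ β g) = f α β * Ψ (α * β) g * (f α β)⁻¹)
    (c : G → G → ℝ) (hc : IsBounded2Cocycle c) (hhom : IsHomogeneous2Cocycle c)
    (hinv : ∀ (α : P) (g h : G), c (Ψ α g) (Ψ α h) = c g h) :
    (∀ α β γ ζ : P,
      eCochain Ψ f c β γ ζ - eCochain Ψ f c (α * β) γ ζ + eCochain Ψ f c α (β * γ) ζ
        - eCochain Ψ f c α β (γ * ζ) + eCochain Ψ f c α β γ = 0) ∧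
    (∀ k : ℝ, (∀ g h : G, |c g h| ≤ k) →
      ∀ α β γ : P, |eCochain Ψ f c α β γ| ≤ 2 * k) := by
  obtain ⟨⟨k0, hk0⟩, hco, hn1, hn2⟩ := hc
  constructor
  · intro α β γ ζ
    -- drop lemmas for the central elements
    have dropL : ∀ (x y z : P) (g h : G), c (g * auxZel Ψ f x y z) h = c g h :=
      fun x y z => (aux_cdrop c hco hn1 hn2 hhom k0 hk0 (auxZel Ψ f x y z)
        (auxZel_central Ψ f hkernel x y z)).1
    have dropR : ∀ (x y z : P) (g h : G), c g (h * auxZel Ψ f x y z) = c g h :=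
      fun x y z => (aux_cdrop c hco hn1 hn2 hhom k0 hk0 (auxZel Ψ f x y z)
        (auxZel_central Ψ f hkernel x y z)).2
    have P1 := auxPsi_eq Ψ f hkernel α β γ
    have P2 := auxPsi_eq Ψ f hkernel α β (γ * ζ)
    have P3 := auxPsi_eq Ψ f hkernel α (β * γ) ζ
    rw [mul_assoc β γ ζ] at P3
    have P4 := auxPsi_eq Ψ f hkernel (α * β) γ ζ
    rw [mul_assoc α β γ] at P4
    have hconjf := auxConjInv Ψ f c hkernel hinv α β
    have hsym_a : ∀ g : G, c (f α β) g = c g (f α β) :=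
      aux_sym_of_conj c hco hn1 hn2 k0 hk0 (f α β) hconjf
    -- abbreviations
    set a := f α β with ha
    set b := f (α * β) γ with hbb
    set d := f (α * (β * γ)) ζ with hd
    set t := f α (β * γ) with htt
    set m := f (α * β) (γ * ζ) with hm
    set w := f α (β * (γ * ζ)) with hw
    -- the six conversion equalities
    have H6 : c (Ψ α (f β γ)) t = c (a * (b * t⁻¹)) t := by
      rw [P1, dropL α β γ]
    have H2 : c (f β γ) (f (β * γ) ζ) = c (a * (b * t⁻¹)) (t * (d * w⁻¹)) := by
      have h0 : c (f β γ) (f (β * γ) ζ)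
          = c (Ψ α (f β γ)) (Ψ α (f (β * γ) ζ)) := (hinv α _ _).symm
      rw [h0, P1, P3, dropL α β γ, dropR α (β * γ) ζ]
    have H4 : c (Ψ α (f (β * γ) ζ)) w = c (t * (d * w⁻¹)) w := by
      rw [P3, dropL α (β * γ) ζ]
    have H5 : c (Ψ α (f β (γ * ζ))) w = c (a * (m * w⁻¹)) w := by
      rw [P2, dropL α β (γ * ζ)]
    have H3 : c (Ψ (α * β) (f γ ζ)) m = c (b * (d * m⁻¹)) m := by
      rw [P4, dropL (α * β) γ ζ]
    have H1 : c (Ψ β (f γ ζ)) (f β (γ * ζ)) = c (b * (d * m⁻¹)) (m * (w⁻¹ * a)) := by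
      have h0 : c (Ψ β (f γ ζ)) (f β (γ * ζ))
          = c (Ψ α (Ψ β (f γ ζ))) (Ψ α (f β (γ * ζ))) := (hinv α _ _).symm
      rw [h0, hkernel α β (f γ ζ), P4, P2, dropR α β (γ * ζ)]
      rw [show a * (b * (d * m⁻¹) * auxZel Ψ f (α * β) γ ζ) * a⁻¹
          = (a * (b * (d * m⁻¹)) * a⁻¹) * auxZel Ψ f (α * β) γ ζ by
        calc a * (b * (d * m⁻¹) * auxZel Ψ f (α * β) γ ζ) * a⁻¹
            = a * (b * (d * m⁻¹)) * (auxZel Ψ f (α * β) γ ζ * a⁻¹) := by group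
          _ = a * (b * (d * m⁻¹)) * (a⁻¹ * auxZel Ψ f (α * β) γ ζ) := by
              rw [auxZel_central Ψ f hkernel (α * β) γ ζ a⁻¹]
          _ = (a * (b * (d * m⁻¹)) * a⁻¹) * auxZel Ψ f (α * β) γ ζ := by group]
      rw [dropL (α * β) γ ζ]
      rw [show a * (m * w⁻¹) = a * (m * (w⁻¹ * a)) * a⁻¹ by group]
      exact hconjf _ _
    -- unfold and finish
    simp only [eCochain]
    rw [mul_assoc α β γ, mul_assoc β γ ζ]
    rw [H1, H2, H3, H4, H5, H6]
    have := aux_core c hco hn1 a b d t m w hsym_a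
    linarith
  · intro k hk α β γ
    simp only [eCochain]
    have b1 := hk (Ψ α (f β γ)) (f α (β * γ))
    have b2 := hk (f α β) (f (α * β) γ)
    rw [abs_le] at b1 b2 ⊢
    constructor <;> [linarith [b1.1, b2.2]; linarith [b1.2, b2.1]]
end
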